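/- arXiv:1410.5721 — 10 statements merged into one kernel-verified Lean document; each statement's English description precedes it below -/
import Mathlib

section
/- Let φ(z) = Σ_{j=1}^m a_j e^{b_j z} with a_j ∈ ℂ \ {0} and distinct nonzero b_j, where |b_1| = ··· = |b_p| > |b_j| for j = p+1,...,m, and write b_j = |b_1| e^{iθ_j}. Then |φ(r e^{-iθ_1})| → +∞ as r → +∞ along positive real r. -/
open Complex Filter Finset

/-- Let `φ(z) = ∑_{j=1}^m a_j e^{b_j z}` with nonzero `a_j` and distinct
nonzero `b_j`, where `|b_1| = ⋯ = |b_p| > |b_j|` for `j = p+1,…,m`, and write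
`b_j = |b_1| e^{iθ_j}` (for `j = 1,…,p`).  Then `|φ(r e^{-iθ_1})| → +∞` as `r → +∞`. -/
theorem exponential_like_tendsto_atTop_along_ray
    (m p : ℕ) (hm : 0 < m) (hp : 0 < p) (hpm : p ≤ m)
    (a b : Fin m → ℂ) (ha : ∀ j, a j ≠ 0) (hb : ∀ j, b j ≠ 0)
    (hbinj : Function.Injective b)
    (heq : ∀ j : Fin m, (j : ℕ) < p → ‖b j‖ = ‖b ⟨0, hm⟩‖)
    (hlt : ∀ j : Fin m, p ≤ (j : ℕ) → ‖b j‖ < ‖b ⟨0, hm⟩‖)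
    (θ : Fin m → ℝ)
    (hθ : ∀ j : Fin m, (j : ℕ) < p →
      b j = ((‖b ⟨0, hm⟩‖ : ℝ) : ℂ) * Complex.exp (Complex.I * (θ j : ℂ)))
    (φ : ℂ → ℂ) (hφ : ∀ z, φ z = ∑ j, a j * Complex.exp (b j * z)) :
    Filter.Tendsto
      (fun r : ℝ => ‖φ ((r : ℂ) * Complex.exp (-Complex.I * (θ ⟨0, hm⟩ : ℂ)))‖)
      Filter.atTop Filter.atTop := by
  classical
  set j0 : Fin m := ⟨0, hm⟩ with hj0
  set R : ℝ := norm (b j0) with hR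
  have hRpos : 0 < R := norm_pos_iff.mpr (hb j0)
  set e : ℂ := Complex.exp (-Complex.I * (θ j0 : ℂ)) with he
  have habse : norm e = 1 := by
    rw [he, Complex.norm_exp]
    simp
  set c : Fin m → ℝ := fun j => (b j * e).re with hc
  have hb0 : b j0 = (R : ℂ) * Complex.exp (Complex.I * (θ j0 : ℂ)) := hθ j0 hp
  have hee : Complex.exp (Complex.I * (θ j0 : ℂ)) * e = 1 := by
    rw [he, ← Complex.exp_add]
    ring_nf
    exact Complex.exp_zero
  have hc0 : c j0 = R := by
    simp only [hc, hb0, mul_assoc, hee, mul_one]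
    simp
  have hcleabs : ∀ j, c j ≤ norm (b j) := by
    intro j
    calc (b j * e).re ≤ norm (b j * e) := Complex.re_le_norm _
      _ = norm (b j) := by rw [norm_mul, habse, mul_one]
  have hcleR : ∀ j, c j ≤ R := by
    intro j
    rcases lt_or_ge (j : ℕ) p with h | h
    · exact (hcleabs j).trans_eq (heq j h)
    · exact (hcleabs j).trans (hlt j h).le
  have hclt : ∀ j, j ≠ j0 → c j < R := by
    intro j hj
    rcases lt_or_eq_of_le (hcleR j) with h | h
    · exact h
    exfalso
    have habsj : norm (b j * e) = norm (b j) := by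
      rw [norm_mul, habse, mul_one]
    have habsR : norm (b j * e) = R := by
      refine le_antisymm ?_ ?_
      · rw [habsj]
        rcases lt_or_ge (j : ℕ) p with hl | hl
        · exact (heq j hl).le
        · exact (hlt j hl).le
      · rw [← h]; exact Complex.re_le_norm _
    have him : (b j * e).im = 0 := by
      have hsq : (b j * e).re ^ 2 + (b j * e).im ^ 2 = norm (b j * e) ^ 2 := by
        rw [Complex.sq_norm, Complex.normSq_apply]; ring
      have : (b j * e).im ^ 2 = 0 := by
        have hre : (b j * e).re = R := h
        rw [hre, habsR] at hsq
        linarith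
      exact pow_eq_zero_iff two_ne_zero |>.mp this
    have hw : b j * e = (R : ℂ) := by
      apply Complex.ext
      · simpa [hc] using h
      · simpa using him
    have : b j = b j0 := by
      have h2 : b j * e * Complex.exp (Complex.I * (θ j0 : ℂ))
          = (R : ℂ) * Complex.exp (Complex.I * (θ j0 : ℂ)) := by rw [hw]
      rw [mul_assoc, mul_comm e, hee, mul_one] at h2
      rw [h2, ← hb0]
    exact hj (hbinj this)
  -- term modulus computation
  have habst : ∀ (j : Fin m) (r : ℝ),
      norm (a j * Complex.exp (b j * ((r : ℂ) * e)))
        = norm (a j) * Real.exp (c j * r) := by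
    intro j r
    rw [norm_mul, Complex.norm_exp]
    congr 1
    have h1 : b j * ((r : ℂ) * e) = (r : ℂ) * (b j * e) := by ring
    rw [h1]
    simp [Complex.mul_re, hc, mul_comm]
  -- lower bound
  have hlow : ∀ r : ℝ,
      norm (a j0) * Real.exp (R * r)
        - ∑ j ∈ univ.erase j0, norm (a j) * Real.exp (c j * r)
      ≤ norm (φ ((r : ℂ) * e)) := by
    intro r
    rw [hφ, ← Finset.add_sum_erase _ _ (mem_univ j0)]
    have h1 : norm (∑ j ∈ univ.erase j0, a j * Complex.exp (b j * ((r : ℂ) * e)))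
        ≤ ∑ j ∈ univ.erase j0, norm (a j) * Real.exp (c j * r) := by
      refine (norm_sum_le _ _).trans_eq ?_
      exact Finset.sum_congr rfl fun j _ => habst j r
    have h2 : norm (a j0 * Complex.exp (b j0 * ((r : ℂ) * e)))
        ≤ norm (a j0 * Complex.exp (b j0 * ((r : ℂ) * e))
            + ∑ j ∈ univ.erase j0, a j * Complex.exp (b j * ((r : ℂ) * e)))
          + norm (∑ j ∈ univ.erase j0, a j * Complex.exp (b j * ((r : ℂ) * e))) := by
      have := norm_sub_le (a j0 * Complex.exp (b j0 * ((r : ℂ) * e))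
          + ∑ j ∈ univ.erase j0, a j * Complex.exp (b j * ((r : ℂ) * e)))
          (∑ j ∈ univ.erase j0, a j * Complex.exp (b j * ((r : ℂ) * e)))
      simpa using this
    have h3 : norm (a j0 * Complex.exp (b j0 * ((r : ℂ) * e)))
        = norm (a j0) * Real.exp (R * r) := by
      rw [habst j0 r, hc0]
    linarith
  -- main tendsto
  have hmain : Tendsto (fun r : ℝ =>
      norm (a j0) * Real.exp (R * r)
        - ∑ j ∈ univ.erase j0, norm (a j) * Real.exp (c j * r))
      atTop atTop := by
    have h1 : Tendsto (fun r : ℝ => Real.exp (R * r)) atTop atTop :=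
      Real.tendsto_exp_atTop.comp (tendsto_id.const_mul_atTop hRpos)
    have hsum : Tendsto (fun r : ℝ =>
        ∑ j ∈ univ.erase j0, norm (a j) * Real.exp ((c j - R) * r))
        atTop (nhds 0) := by
      have : Tendsto (fun r : ℝ =>
          ∑ j ∈ univ.erase j0, norm (a j) * Real.exp ((c j - R) * r))
          atTop (nhds (∑ j ∈ univ.erase j0, (0 : ℝ))) := by
        refine tendsto_finset_sum _ fun j hj => ?_
        have hneg : c j - R < 0 := sub_neg.mpr (hclt j (Finset.ne_of_mem_erase hj))
        have hexp : Tendsto (fun r : ℝ => Real.exp ((c j - R) * r)) atTop (nhds 0) :=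
          Real.tendsto_exp_atBot.comp ((Filter.tendsto_const_mul_atBot_of_neg hneg).mpr tendsto_id)
        simpa using (tendsto_const_nhds (x := norm (a j))).mul hexp
      simpa using this
    have h2 : Tendsto (fun r : ℝ =>
        norm (a j0) - ∑ j ∈ univ.erase j0, norm (a j) * Real.exp ((c j - R) * r))
        atTop (nhds (norm (a j0))) := by
      simpa using tendsto_const_nhds.sub hsum
    have h3 := h1.atTop_mul_pos (norm_pos_iff.mpr (ha j0)) h2
    refine h3.congr fun r => ?_
    rw [mul_sub, Finset.mul_sum]
    congr 1
    · ring
    refine Finset.sum_congr rfl fun j _ => ?_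
    rw [← mul_assoc, mul_comm (Real.exp (R * r)), mul_assoc, ← Real.exp_add]
    ring_nf
  refine tendsto_atTop_mono (fun r => ?_) hmain
  exact hlow r
end

section
/- Let Ω be a nonempty set and F ⊆ ℂ^Ω a family of functions. Suppose there exists f ∈ F such that f(Ω) is uncountable and φ ∘ f ∈ F for every exponential-like function φ. Then for any set H ⊆ (0,+∞) of cardinality continuum that is linearly independent over ℚ, the family {exp ∘ (r·f) : r ∈ H} is a free system of generators of a subalgebra of ℂ^Ω contained in F ∪ {0}; in particular F is strongly 𝔠-algebrable. -/
/-- A function `φ : ℂ → ℂ` is exponential-like if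
`φ(z) = ∑_{j=1}^m a_j e^{b_j z}` with `m ≥ 1`, nonzero `a_j` and
pairwise distinct nonzero `b_j`. -/
def ExpLike (φ : ℂ → ℂ) : Prop :=
  ∃ (m : ℕ) (_ : 0 < m) (a b : Fin m → ℂ),
    (∀ j, a j ≠ 0) ∧ (∀ j, b j ≠ 0) ∧ Function.Injective b ∧
    ∀ z, φ z = ∑ j, a j * Complex.exp (b j * z)

/-- The additive-to-multiplicative character `z ↦ exp (c z)` as a monoid hom. -/
noncomputable def expChar (c : ℂ) : Multiplicative ℂ →* ℂ where
  toFun z := Complex.exp (c * Multiplicative.toAdd z)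
  map_one' := by simp
  map_mul' x y := by
    simp [mul_add, Complex.exp_add]

lemma expChar_injective : Function.Injective expChar := by
  intro c c' h
  by_contra hcc
  have hd : c - c' ≠ 0 := sub_ne_zero.mpr hcc
  have h1 : ∀ z : ℂ, Complex.exp (c * z) = Complex.exp (c' * z) := fun z =>
    congrFun (congrArg (fun (φ : Multiplicative ℂ →* ℂ) => (φ : Multiplicative ℂ → ℂ)) h)
      (Multiplicative.ofAdd z)
  set z0 : ℂ := (Real.pi * Complex.I) / (c - c') with hz0
  have h2 : Complex.exp ((c - c') * z0) = 1 := by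
    rw [sub_mul, Complex.exp_sub, h1 z0, div_self (Complex.exp_ne_zero _)]
  have h5 : (c - c') * z0 = Real.pi * Complex.I := by
    rw [hz0, mul_div_cancel₀ _ hd]
  rw [Complex.exp_eq_one_iff] at h2
  obtain ⟨n, hn⟩ := h2
  rw [h5] at hn
  have hpi : (Real.pi : ℂ) * Complex.I ≠ 0 := by
    simp [Complex.I_ne_zero, Real.pi_ne_zero, Complex.ofReal_eq_zero]
  have h6 : (1 : ℂ) * ((Real.pi : ℂ) * Complex.I)
      = ((n : ℂ) * 2) * ((Real.pi : ℂ) * Complex.I) := by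
    linear_combination hn
  have h7 : (1 : ℂ) = (n : ℂ) * 2 := mul_right_cancel₀ hpi h6
  have h8 : (1 : ℤ) = n * 2 := by exact_mod_cast h7
  omega

/-- An exponential-like sum with nonzero coefficients and distinct exponents is
not the zero function. -/
lemma expLike_sum_ne_zero {m : ℕ} (hm : 0 < m) (a b : Fin m → ℂ)
    (ha : ∀ j, a j ≠ 0) (hb : Function.Injective b) :
    (fun z => ∑ j, a j * Complex.exp (b j * z)) ≠ 0 := by
  intro h0
  have li : LinearIndependent ℂ fun j : Fin m => ((expChar (b j)) : Multiplicative ℂ → ℂ) :=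
    (linearIndependent_monoidHom (Multiplicative ℂ) ℂ).comp
      (fun j => expChar (b j)) (expChar_injective.comp hb)
  have hz : ∑ j, a j • ((expChar (b j)) : Multiplicative ℂ → ℂ) = 0 := by
    funext z
    have := congrFun h0 (Multiplicative.toAdd z)
    simpa [expChar, Finset.sum_apply] using this
  have := Fintype.linearIndependent_iff.mp li a hz ⟨0, hm⟩
  exact ha _ this

/-- The zero set of a non-identically-zero entire function is countable. -/
lemma countable_zeros_of_analytic (φ : ℂ → ℂ) (hφ : ∀ z, AnalyticAt ℂ φ z)
    (hne : φ ≠ 0) : {z : ℂ | φ z = 0}.Countable := by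
  set Z : Set ℂ := {z : ℂ | φ z = 0} with hZ
  -- each zero is isolated
  have hiso : ∀ z ∈ Z, ∃ U : Set ℂ, IsOpen U ∧ z ∈ U ∧ U ∩ Z ⊆ {z} := by
    intro z hz
    rcases (hφ z).eventually_eq_zero_or_eventually_ne_zero with h | h
    · exfalso
      apply hne
      funext w
      have : Set.EqOn φ 0 Set.univ := by
        apply AnalyticOnNhd.eqOn_zero_of_preconnected_of_eventuallyEq_zero
          (fun u _ => hφ u) isPreconnected_univ (Set.mem_univ z) h
      exact this (Set.mem_univ w)
    · rw [Filter.eventually_iff, mem_nhdsWithin] at h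
      obtain ⟨U, hU, hzU, hsub⟩ := h
      refine ⟨U, hU, hzU, ?_⟩
      intro w ⟨hwU, hwZ⟩
      by_contra hw
      exact hsub ⟨hwU, hw⟩ hwZ
  choose! U hUopen hUmem hUsub using hiso
  -- Lindelöf argument
  have hL : IsLindelof Z := HereditarilyLindelof_LindelofSets Z
  have hcover : Z ⊆ ⋃ z : Z, U z := fun z hz =>
    Set.mem_iUnion.mpr ⟨⟨z, hz⟩, hUmem z hz⟩
  obtain ⟨t, htc, htsub⟩ := hL.elim_countable_subcover (fun z : Z => U z)
    (fun z => hUopen z z.2) hcover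
  have : Z ⊆ ⋃ z ∈ t, ({(z : ℂ)} : Set ℂ) := by
    intro w hw
    obtain ⟨z, hzt, hwU⟩ := Set.mem_iUnion₂.mp (htsub hw)
    exact Set.mem_iUnion₂.mpr ⟨z, hzt, hUsub z z.2 ⟨hwU, hw⟩⟩
  exact Set.Countable.mono this (htc.biUnion fun _ _ => Set.countable_singleton _)

/-- Let `Ω` be nonempty and `F ⊆ ℂ^Ω`.  Suppose some `f ∈ F` has
uncountable range and `φ ∘ f ∈ F` for every exponential-like `φ`.  Then for every
set `H ⊆ (0,∞)` of cardinality `𝔠` that is `ℚ`-linearly independent, the family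
`{exp ∘ (r·f) : r ∈ H}` is a free system of generators of an algebra contained in
`F ∪ {0}`: the map `r ↦ exp ∘ (r f)` is injective on `H` and, for every `N`, every
nonzero polynomial `P` in `N` variables without constant term, and every injective
choice of `r₁,…,r_N ∈ H`, the function `x ↦ P(e^{r₁ f(x)},…,e^{r_N f(x)})` is
nonzero and belongs to `F`.  (In particular `F` is strongly `𝔠`-algebrable.) -/
theorem strongly_c_algebrable_of_expLike_stable
    (Ω : Type*) [Nonempty Ω] (F : Set (Ω → ℂ)) (f : Ω → ℂ) (hfF : f ∈ F)
    (hunc : ¬ (Set.range f).Countable)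
    (hstab : ∀ φ : ℂ → ℂ, ExpLike φ → (φ ∘ f) ∈ F)
    (H : Set ℝ) (hH : H ⊆ Set.Ioi (0 : ℝ))
    (hcard : Cardinal.mk H = Cardinal.continuum)
    (hind : LinearIndependent ℚ (fun r : H => (r : ℝ))) :
    (Function.Injective fun r : H => (fun x => Complex.exp ((r : ℝ) * f x))) ∧
    ∀ (N : ℕ) (P : MvPolynomial (Fin N) ℂ), P ≠ 0 → MvPolynomial.constantCoeff P = 0 →
      ∀ r : Fin N → H, Function.Injective r →
        (fun x : Ω => MvPolynomial.eval (fun i => Complex.exp (((r i : ℝ) : ℂ) * f x)) P) ≠ 0 ∧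
        (fun x : Ω => MvPolynomial.eval (fun i => Complex.exp (((r i : ℝ) : ℂ) * f x)) P) ∈ F := by
  have main : ∀ (N : ℕ) (P : MvPolynomial (Fin N) ℂ), P ≠ 0 →
      MvPolynomial.constantCoeff P = 0 →
      ∀ r : Fin N → H, Function.Injective r →
        (fun x : Ω => MvPolynomial.eval (fun i => Complex.exp (((r i : ℝ) : ℂ) * f x)) P) ≠ 0 ∧
        (fun x : Ω => MvPolynomial.eval (fun i => Complex.exp (((r i : ℝ) : ℂ) * f x)) P) ∈ F := by
    intro N P hP hP0 r hr
    set c : Fin N → ℝ := fun i => ((r i : ℝ)) with hc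
    have hcpos : ∀ i, 0 < c i := fun i => hH (r i).2
    have hli : LinearIndependent ℚ c := hind.comp r hr
    -- the exponent attached to a monomial
    set w : (Fin N →₀ ℕ) → ℝ := fun d => ∑ i, (d i : ℝ) * c i with hw
    have hwinj : Function.Injective w := by
      intro d d' hdd
      have h1 : ∀ i : Fin N, ((d i : ℚ) - (d' i : ℚ)) • c i
          = (d i : ℝ) * c i - (d' i : ℝ) * c i := by
        intro i; push_cast [Rat.smul_def]; ring
      have hsum : ∑ i, (((d i : ℚ) - (d' i : ℚ)) • c i) = 0 := by
        simp only [h1, Finset.sum_sub_distrib]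
        have : w d - w d' = 0 := by rw [hdd, sub_self]
        simpa [hw] using this
      have := Fintype.linearIndependent_iff.mp hli _ hsum
      ext i
      have hi := this i
      have h2 : (d i : ℚ) = (d' i : ℚ) := by linarith [hi, sub_eq_zero.mp hi]
      exact_mod_cast h2
    have hwpos : ∀ d ∈ P.support, 0 < w d := by
      intro d hd
      have hd0 : d ≠ 0 := by
        rintro rfl
        rw [MvPolynomial.mem_support_iff] at hd
        exact hd hP0
      obtain ⟨i, hi⟩ : ∃ i, d i ≠ 0 := by
        by_contra hno
        push_neg at hno
        exact hd0 (Finsupp.ext hno)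
      apply Finset.sum_pos' (fun j _ => mul_nonneg (Nat.cast_nonneg _) (hcpos j).le)
      exact ⟨i, Finset.mem_univ i, by
        have h1 : (1 : ℝ) ≤ (d i : ℝ) := by exact_mod_cast Nat.one_le_iff_ne_zero.mpr hi
        nlinarith [hcpos i]⟩
    -- the exponential-like function φ
    set φ : ℂ → ℂ := fun z =>
      ∑ d ∈ P.support, MvPolynomial.coeff d P * Complex.exp ((w d : ℂ) * z) with hφdef
    have hkey : ∀ z : ℂ,
        MvPolynomial.eval (fun i => Complex.exp ((c i : ℂ) * z)) P = φ z := by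
      intro z
      rw [MvPolynomial.eval_eq']
      simp only [hφdef]
      apply Finset.sum_congr rfl
      intro d _
      congr 1
      have hpow : ∀ i : Fin N, Complex.exp ((c i : ℂ) * z) ^ d i
          = Complex.exp ((d i : ℂ) * ((c i : ℂ) * z)) := fun i =>
        (Complex.exp_nat_mul _ _).symm
      rw [Finset.prod_congr rfl fun i _ => hpow i, ← Complex.exp_sum]
      congr 1
      simp only [hw]
      push_cast
      rw [Finset.sum_mul]
      apply Finset.sum_congr rfl
      intro i _
      ring
    have hsupp : P.support.Nonempty := by
      rw [Finset.nonempty_iff_ne_empty]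
      intro h
      exact hP (MvPolynomial.support_eq_empty.mp h)
    -- φ is exponential-like
    set m := P.support.card with hm
    have hmpos : 0 < m := Finset.card_pos.mpr hsupp
    set e : Fin m ≃ {d // d ∈ P.support} := P.support.equivFin.symm with he
    set a : Fin m → ℂ := fun j => MvPolynomial.coeff (e j : Fin N →₀ ℕ) P with ha
    set b : Fin m → ℂ := fun j => ((w (e j : Fin N →₀ ℕ) : ℝ) : ℂ) with hb
    have ha0 : ∀ j, a j ≠ 0 := fun j =>
      MvPolynomial.mem_support_iff.mp (e j).2
    have hb0 : ∀ j, b j ≠ 0 := fun j => by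
      have := hwpos _ (e j).2
      simp only [hb, ne_eq, Complex.ofReal_eq_zero]
      exact ne_of_gt this
    have hbinj : Function.Injective b := by
      intro j j' hjj
      simp only [hb] at hjj
      have h1 : w (e j : Fin N →₀ ℕ) = w (e j' : Fin N →₀ ℕ) :=
        Complex.ofReal_injective hjj
      exact e.injective (Subtype.ext (hwinj h1))
    have hφsum : ∀ z, φ z = ∑ j, a j * Complex.exp (b j * z) := by
      intro z
      simp only [hφdef, ha, hb]
      rw [← Finset.sum_attach P.support
        (fun d => MvPolynomial.coeff d P * Complex.exp ((w d : ℂ) * z))]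
      exact (Equiv.sum_comp e fun d =>
        MvPolynomial.coeff (d : Fin N →₀ ℕ) P
          * Complex.exp ((w (d : Fin N →₀ ℕ) : ℂ) * z)).symm
    have hExp : ExpLike φ := ⟨m, hmpos, a, b, ha0, hb0, hbinj, hφsum⟩
    have hfun : (fun x : Ω =>
        MvPolynomial.eval (fun i => Complex.exp (((r i : ℝ) : ℂ) * f x)) P) = φ ∘ f := by
      funext x
      exact hkey (f x)
    constructor
    · -- nonzero
      rw [hfun]
      intro h0
      -- φ is analytic everywhere
      have hφan : ∀ z, AnalyticAt ℂ φ z := by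
        intro z
        simp only [hφdef]
        apply Finset.analyticAt_fun_sum
        intro d _
        exact analyticAt_const.mul ((analyticAt_cexp).comp
          ((analyticAt_const).mul analyticAt_id))
      have hφne : φ ≠ 0 := by
        have hx := expLike_sum_ne_zero hmpos a b ha0 hbinj
        intro h
        apply hx
        funext z
        have := congrFun h z
        rw [hφsum z] at this
        exact this
      have hcount := countable_zeros_of_analytic φ hφan hφne
      apply hunc
      apply hcount.mono
      intro z hz
      obtain ⟨x, rfl⟩ := hz
      exact congrFun h0 x
    · rw [hfun]
      exact hstab φ hExp
  refine ⟨?_, main⟩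
  -- injectivity from the main statement
  intro r₁ r₂ hEq
  by_contra hne
  set P : MvPolynomial (Fin 2) ℂ := MvPolynomial.X 0 - MvPolynomial.X 1 with hPdef
  have hP : P ≠ 0 := by
    rw [hPdef]
    refine sub_ne_zero.mpr fun h => ?_
    have := MvPolynomial.X_injective (R := ℂ) h
    simp at this
  have hP0 : MvPolynomial.constantCoeff P = 0 := by simp [hPdef]
  have hrinj : Function.Injective (![r₁, r₂] : Fin 2 → H) := by
    intro i j hij
    fin_cases i <;> fin_cases j <;> simp_all
  obtain ⟨hne', _⟩ := main 2 P hP hP0 ![r₁, r₂] hrinj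
  apply hne'
  funext x
  have h1 : Complex.exp (((r₁ : ℝ) : ℂ) * f x) = Complex.exp (((r₂ : ℝ) : ℂ) * f x) :=
    congrFun hEq x
  simp only [hPdef, map_sub, MvPolynomial.eval_X, Matrix.cons_val_zero, Matrix.cons_val_one,
    Matrix.head_cons, Pi.zero_apply]
  rw [h1]
  ring
end

section
/- Let X be a T1, perfect, second countable topological space and let (x_n)_{n≥1} be a dense sequence in X. Then one can extract countably many pairwise disjoint subsequences (x_{n(k,j)})_{j≥1}, k = 1,2,..., such that each subsequence consists of distinct points and each is dense in X. -/
/-- In a T1, perfect, second countable topological space, from every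
dense sequence `(x_n)` one can extract countably many pairwise disjoint
subsequences, each consisting of distinct points and each dense in `X`. -/
theorem extract_countably_many_disjoint_dense_subsequences
    (X : Type*) [TopologicalSpace X] [T1Space X]
    [SecondCountableTopology X]
    (hperf : ∀ x : X, Filter.NeBot (nhdsWithin x {x}ᶜ))
    (x : ℕ → X) (hx : DenseRange x) :
    ∃ n : ℕ → ℕ → ℕ,
      (∀ k, StrictMono (n k)) ∧
      (∀ k, Function.Injective (fun j => x (n k j))) ∧
      (∀ k, DenseRange (fun j => x (n k j))) ∧
      (∀ k k', k ≠ k' →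
        Disjoint (Set.range (n k)) (Set.range (n k')) ∧
        Disjoint (Set.range (fun j => x (n k j))) (Set.range (fun j => x (n k' j)))) := by
  classical
  obtain ⟨b, hbc, hbne, hbasis⟩ := TopologicalSpace.exists_countable_basis X
  obtain ⟨B, hB⟩ := (hbc.insert ∅).exists_eq_range ⟨∅, Set.mem_insert _ _⟩
  set V : ℕ → Set X := fun t => if (B t.unpair.2).Nonempty then B t.unpair.2 else Set.univ
    with hVdef
  have hVopen : ∀ t, IsOpen (V t) := by
    intro t
    simp only [hVdef]
    split
    · rename_i h
      have hmem : B t.unpair.2 ∈ insert ∅ b := hB ▸ Set.mem_range_self _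
      rcases hmem with h0 | hmem
      · exact absurd h0 h.ne_empty
      · exact hbasis.isOpen hmem
    · exact isOpen_univ
  have hVne : ∀ t, (V t).Nonempty := by
    intro t
    simp only [hVdef]
    split
    · assumption
    · exact ⟨x 0, trivial⟩
  -- removing a finite set from a nonempty open set keeps it nonempty
  have hremove : ∀ (U : Set X), IsOpen U → U.Nonempty → ∀ F : Set X, F.Finite →
      (U \ F).Nonempty := by
    rintro U hU ⟨v, hv⟩ F hF
    have hcl : IsClosed (F \ {v}) := (hF.subset Set.diff_subset).isClosed
    have hW : U \ (F \ {v}) ∈ nhdsWithin v {v}ᶜ :=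
      nhdsWithin_le_nhds ((hU.sdiff hcl).mem_nhds ⟨hv, fun h => h.2 rfl⟩)
    obtain ⟨w, hw1, hw2⟩ := (hperf v).nonempty_of_mem
      (Filter.inter_mem hW self_mem_nhdsWithin)
    exact ⟨w, hw1.1, fun hwF => hw1.2 ⟨hwF, hw2⟩⟩
  have key : ∀ t m, ∃ i, x i ∈ V t ∧ ∀ j ≤ m, x i ≠ x j := by
    intro t m
    have hFfin : (x '' {j | j ≤ m}).Finite := (Set.finite_le_nat m).image x
    have h1 : (V t \ x '' {j | j ≤ m}).Nonempty :=
      hremove _ (hVopen t) (hVne t) _ hFfin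
    have h2 : IsOpen (V t \ x '' {j | j ≤ m}) := (hVopen t).sdiff hFfin.isClosed
    obtain ⟨i, hi⟩ := hx.exists_mem_open h2 h1
    exact ⟨i, hi.1, fun j hj hne => hi.2 ⟨j, hj, hne.symm⟩⟩
  choose pick hpick1 hpick2 using key
  set g : ℕ → ℕ := fun t => Nat.rec (pick 0 0) (fun t ih => pick (t + 1) ih) t with hgdef
  have hgsucc : ∀ t, g (t + 1) = pick (t + 1) (g t) := fun t => rfl
  have hgmono : StrictMono g := by
    apply strictMono_nat_of_lt_succ
    intro t
    by_contra h
    push_neg at h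
    exact hpick2 (t + 1) (g t) (g (t + 1)) h (by rw [hgsucc])
  have hxg : ∀ s t, s < t → x (g t) ≠ x (g s) := by
    intro s t hst
    cases t with
    | zero => omega
    | succ t =>
      have hs : g s ≤ g t := hgmono.monotone (Nat.lt_succ_iff.mp hst)
      have := hpick2 (t + 1) (g t) (g s) hs
      rwa [← hgsucc] at this
  have hxginj : Function.Injective fun t => x (g t) := by
    intro s t h
    by_contra hne
    rcases lt_or_gt_of_ne hne with hlt | hlt
    · exact hxg s t hlt h.symm
    · exact hxg t s hlt h
  have hVmem : ∀ t, x (g t) ∈ V t := by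
    intro t
    cases t with
    | zero => exact hpick1 0 0
    | succ t => rw [hgsucc]; exact hpick1 (t + 1) (g t)
  refine ⟨fun k j => g (Nat.pair k j), ?_, ?_, ?_, ?_⟩
  · intro k a c hac
    exact hgmono (Nat.pair_lt_pair_right k hac)
  · intro k a c hac
    have := hxginj hac
    have h2 := congrArg (fun t => t.unpair.2) this
    simpa using h2
  · intro k
    rw [DenseRange, dense_iff_inter_open]
    rintro U hU ⟨u, hu⟩
    obtain ⟨v, hvb, huv, hvU⟩ := hbasis.exists_subset_of_mem_open hu hU
    have : v ∈ Set.range B := hB ▸ Set.mem_insert_of_mem _ hvb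
    obtain ⟨m, rfl⟩ := this
    have hmem : x (g (Nat.pair k m)) ∈ B m := by
      have h := hVmem (Nat.pair k m)
      simp only [hVdef, Nat.unpair_pair] at h
      rwa [if_pos ⟨u, huv⟩] at h
    exact ⟨x (g (Nat.pair k m)), hvU hmem, ⟨m, rfl⟩⟩
  · intro k k' hkk'
    constructor
    · rw [Set.disjoint_left]
      rintro a ⟨j, rfl⟩ ⟨j', hj'⟩
      have := hgmono.injective hj'
      have h2 := congrArg (fun t => t.unpair.1) this
      simp at h2
      exact hkk' h2.symm
    · rw [Set.disjoint_left]
      rintro a ⟨j, rfl⟩ ⟨j', hj'⟩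
      have := hxginj hj'
      have h2 := congrArg (fun t => t.unpair.1) this
      simp at h2
      exact hkk' h2.symm
end

section
/- Let X be a topological vector space, α a cardinal, and A ⊆ X an α-lineable subset. Suppose there exists a dense-lineable subset B ⊆ X with A + B ⊆ A, and X has an open basis of cardinality at most α. Then A is dense-lineable; if moreover A ∩ B = ∅, then A ∪ {0} contains a dense vector subspace D with dim(D) = α. -/
open Pointwise

/-- dense-lineability criterion: Let `X` be a topological vector
space, `α` a cardinal, `A ⊆ X` an `α`-lineable set.  If there is a dense-lineable
`B ⊆ X` with `A + B ⊆ A` and `X` has an open basis of cardinality `≤ α`, then `A`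
is dense-lineable; if moreover `A ∩ B = ∅`, then `A ∪ {0}` contains a dense vector
subspace of dimension `α`. -/
theorem dense_lineability_criterion
    (X : Type*) [AddCommGroup X] [Module ℂ X] [TopologicalSpace X]
    [IsTopologicalAddGroup X] [ContinuousSMul ℂ X]
    (α : Cardinal) (A B : Set X)
    (hA : ∃ M : Submodule ℂ X, Module.rank ℂ M = α ∧ (M : Set X) \ {0} ⊆ A)
    (hB : ∃ M : Submodule ℂ X, Dense (M : Set X) ∧ (M : Set X) \ {0} ⊆ B)
    (hAB : A + B ⊆ A)
    (hbasis : ∃ 𝓑 : Set (Set X), TopologicalSpace.IsTopologicalBasis 𝓑 ∧ Cardinal.mk 𝓑 ≤ α) :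
    (∃ D : Submodule ℂ X, Dense (D : Set X) ∧ (D : Set X) \ {0} ⊆ A) ∧
    (A ∩ B = ∅ →
      ∃ D : Submodule ℂ X, Dense (D : Set X) ∧ (D : Set X) \ {0} ⊆ A ∧
        Module.rank ℂ D = α) := by
  classical
  obtain ⟨MA, hMArank, hMAsub⟩ := hA
  obtain ⟨MB, hMBdense, hMBsub⟩ := hB
  obtain ⟨𝓑, h𝓑, hcard⟩ := hbasis
  set ι := Module.Basis.ofVectorSpaceIndex ℂ MA with hιdef
  set b : Module.Basis ι ℂ MA := Module.Basis.ofVectorSpace ℂ MA with hbdef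
  have hι : Cardinal.mk ι = α := by rw [b.mk_eq_rank'', hMArank]
  set u : ι → X := fun i => (b i : X) with hudef
  have hu_mem : ∀ i, u i ∈ MA := fun i => (b i).2
  have hu_li : LinearIndependent ℂ u :=
    b.linearIndependent.map' MA.subtype (Submodule.ker_subtype MA)
  -- embed nonempty basic open sets into ι
  have h1 : Cardinal.mk {U : Set X // U ∈ 𝓑 ∧ U.Nonempty} ≤ Cardinal.mk ι := by
    calc Cardinal.mk {U : Set X // U ∈ 𝓑 ∧ U.Nonempty}
        ≤ Cardinal.mk 𝓑 := Cardinal.mk_subtype_le_of_subset (fun U hU => hU.1)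
      _ ≤ α := hcard
      _ = Cardinal.mk ι := hι.symm
  obtain ⟨f⟩ := (Cardinal.le_def _ _).1 h1
  have hw : ∀ U : {U : Set X // U ∈ 𝓑 ∧ U.Nonempty},
      ∃ v, v ∈ MB ∧ u (f U) + v ∈ (U : Set X) := by
    intro U
    have hopen : IsOpen ((fun x => u (f U) + x) ⁻¹' (U : Set X)) :=
      (h𝓑.isOpen U.2.1).preimage (continuous_add_left _)
    have hne : ((fun x => u (f U) + x) ⁻¹' (U : Set X)).Nonempty := by
      obtain ⟨y, hy⟩ := U.2.2
      exact ⟨y - u (f U), by simpa using hy⟩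
    obtain ⟨v, hv1, hv2⟩ := hMBdense.exists_mem_open hopen hne
    exact ⟨v, hv1, hv2⟩
  choose w hw1 hw2 using hw
  set v : ι → X := fun i => if h : ∃ U, f U = i then w h.choose else 0 with hvdef
  have hv_mem : ∀ i, v i ∈ MB := by
    intro i
    by_cases h : ∃ U, f U = i
    · simp only [hvdef, dif_pos h]; exact hw1 _
    · simp only [hvdef, dif_neg h]; exact MB.zero_mem
  have hv_f : ∀ U, v (f U) = w U := by
    intro U
    have h : ∃ U', f U' = f U := ⟨U, rfl⟩
    have : h.choose = U := f.injective h.choose_spec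
    simp only [hvdef, dif_pos h, this]
  set g : ι → X := fun i => u i + v i with hgdef
  set D : Submodule ℂ X := Submodule.span ℂ (Set.range g) with hDdef
  -- density
  have hDdense : Dense (D : Set X) := by
    rw [h𝓑.dense_iff]
    intro U hU hUne
    refine ⟨g (f ⟨U, hU, hUne⟩), ?_, Submodule.subset_span (Set.mem_range_self _)⟩
    have := hw2 ⟨U, hU, hUne⟩
    simpa [hgdef, hv_f] using this
  -- splitting linear combinations
  have hsplit : ∀ c : ι →₀ ℂ, Finsupp.linearCombination ℂ g c =
      Finsupp.linearCombination ℂ u c + Finsupp.linearCombination ℂ v c := by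
    intro c
    rw [Finsupp.linearCombination_apply, Finsupp.linearCombination_apply,
      Finsupp.linearCombination_apply, ← Finsupp.sum_add]
    exact Finsupp.sum_congr (fun i _ => smul_add _ _ _)
  have hmemA : ∀ c : ι →₀ ℂ, Finsupp.linearCombination ℂ u c ∈ MA := by
    intro c
    rw [Finsupp.linearCombination_apply]
    exact MA.sum_mem (fun i _ => MA.smul_mem _ (hu_mem i))
  have hmemB : ∀ c : ι →₀ ℂ, Finsupp.linearCombination ℂ v c ∈ MB := by
    intro c
    rw [Finsupp.linearCombination_apply]
    exact MB.sum_mem (fun i _ => MB.smul_mem _ (hv_mem i))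
  have hune : ∀ c : ι →₀ ℂ, c ≠ 0 → Finsupp.linearCombination ℂ u c ≠ 0 := by
    intro c hc h
    exact hc (linearIndependent_iff.1 hu_li c h)
  -- nonzero elements of D belong to A
  have hDA : (D : Set X) \ {0} ⊆ A := by
    rintro x ⟨hxD, hx0⟩
    have hx0' : x ≠ 0 := hx0
    obtain ⟨c, hc⟩ := Finsupp.mem_span_range_iff_exists_finsupp.1 hxD
    have hc' : Finsupp.linearCombination ℂ g c = x := by
      rw [Finsupp.linearCombination_apply]; exact hc
    have hcne : c ≠ 0 := by
      rintro rfl; simp at hc'; exact hx0' hc'.symm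
    have hxeq : x = Finsupp.linearCombination ℂ u c + Finsupp.linearCombination ℂ v c := by
      rw [← hc', hsplit]
    have haA : Finsupp.linearCombination ℂ u c ∈ A :=
      hMAsub ⟨hmemA c, hune c hcne⟩
    by_cases hb0 : Finsupp.linearCombination ℂ v c = 0
    · rw [hxeq, hb0, add_zero]; exact haA
    · rw [hxeq]
      exact hAB (Set.add_mem_add haA (hMBsub ⟨hmemB c, hb0⟩))
  refine ⟨⟨D, hDdense, hDA⟩, ?_⟩
  intro hdisj
  refine ⟨D, hDdense, hDA, ?_⟩
  -- the family g is linearly independent under disjointness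
  have hg_li : LinearIndependent ℂ g := by
    rw [linearIndependent_iff]
    intro c hc
    by_contra hcne
    have hb0 : Finsupp.linearCombination ℂ v c ≠ 0 := by
      intro h
      apply hune c hcne
      have := hsplit c
      rw [hc, h, add_zero] at this
      exact this.symm
    have heq : Finsupp.linearCombination ℂ u c = -Finsupp.linearCombination ℂ v c := by
      have h := hsplit c
      rw [hc] at h
      exact eq_neg_of_add_eq_zero_left h.symm
    have ha0 : Finsupp.linearCombination ℂ u c ≠ 0 := hune c hcne
    have haA : Finsupp.linearCombination ℂ u c ∈ A := hMAsub ⟨hmemA c, ha0⟩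
    have haB : Finsupp.linearCombination ℂ u c ∈ B := by
      rw [heq]
      refine hMBsub ⟨MB.neg_mem (hmemB c), ?_⟩
      simpa using hb0
    have : Finsupp.linearCombination ℂ u c ∈ A ∩ B := ⟨haA, haB⟩
    rw [hdisj] at this
    exact this
  have : Module.rank ℂ D = Cardinal.mk (Set.range g) := rank_span hg_li
  rw [this, Cardinal.mk_range_eq g hg_li.injective, hι]
end

section
/- For a domain G ⊆ ℂ and f ∈ H(G), f is holomorphic exactly on G (i.e., f ∈ H_e(G)) if and only if for every a ∈ G the radius of convergence of the Taylor series of f centered at a equals dist(a, ∂G). -/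
/-- A domain in `ℂ`: a nonempty connected open set (here, as in the paper,
also a proper subset of `ℂ`). -/
def IsDomain' (G : Set ℂ) : Prop := IsOpen G ∧ IsConnected G ∧ G ≠ Set.univ

/-- `f` is holomorphic exactly on `G` (i.e. `f ∈ H_e(G)`): there are no domains
`G₁, G₂` with `G₂ ⊆ G ∩ G₁`, `G₁ ⊄ G`, and a holomorphic function on `G₁`
agreeing with `f` on `G₂`. -/
def HolExact (G : Set ℂ) (f : ℂ → ℂ) : Prop :=
  ¬ ∃ (G₁ G₂ : Set ℂ) (g : ℂ → ℂ),
      IsOpen G₁ ∧ IsConnected G₁ ∧ IsOpen G₂ ∧ IsConnected G₂ ∧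
      G₂ ⊆ G ∩ G₁ ∧ ¬ G₁ ⊆ G ∧ DifferentiableOn ℂ g G₁ ∧ Set.EqOn g f G₂

/-- The radius of convergence `ρ(f,a)` of the Taylor series of `f` at `a`. -/
noncomputable def taylorRadius (f : ℂ → ℂ) (a : ℂ) : ENNReal :=
  FormalMultilinearSeries.radius
    (fun n => ContinuousMultilinearMap.mkPiRing ℂ (Fin n)
      (iteratedDeriv n f a / n.factorial) : FormalMultilinearSeries ℂ ℂ ℂ)

open Set Metric
open scoped ENNReal NNReal

/-- The coefficients of any power series of `f` at `a` are the Taylor coefficients. -/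
lemma hasFPowerSeriesAt_coeff {f : ℂ → ℂ} {p : FormalMultilinearSeries ℂ ℂ ℂ} {a : ℂ}
    (h : HasFPowerSeriesAt f p a) (n : ℕ) :
    p.coeff n = iteratedDeriv n f a / n.factorial := by
  obtain ⟨r, hr⟩ := h
  have key := hr.factorial_smul (1 : ℂ) n
  rw [iteratedDeriv_eq_iteratedFDeriv, ← key]
  have h1 : p.coeff n = p n (fun _ => (1 : ℂ)) := rfl
  have h2 : ((n.factorial : ℂ)) ≠ 0 := by
    exact_mod_cast n.factorial_ne_zero
  rw [h1, nsmul_eq_mul, mul_comm, mul_div_assoc, div_self h2, mul_one]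

/-- The Taylor radius equals the radius of any power series of `f` at `a`. -/
lemma taylorRadius_eq {f : ℂ → ℂ} {p : FormalMultilinearSeries ℂ ℂ ℂ} {a : ℂ}
    (h : HasFPowerSeriesAt f p a) : taylorRadius f a = p.radius := by
  have hs : (fun n => ContinuousMultilinearMap.mkPiRing ℂ (Fin n)
      (iteratedDeriv n f a / n.factorial) : FormalMultilinearSeries ℂ ℂ ℂ) = p := by
    funext n
    rw [← hasFPowerSeriesAt_coeff h n, p.mkPiRing_coeff_eq]
  rw [taylorRadius, hs]

/-- A function differentiable on a closed ball has Taylor radius at least the radius. -/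
lemma le_taylorRadius {g : ℂ → ℂ} {a : ℂ} {R : ℝ≥0} (hR : 0 < R)
    (h : DifferentiableOn ℂ g (Metric.closedBall a R)) : (R : ℝ≥0∞) ≤ taylorRadius g a := by
  have H := h.hasFPowerSeriesOnBall hR
  rw [taylorRadius_eq H.hasFPowerSeriesAt]
  exact H.r_le

/-- A preconnected set avoiding the frontier of an open set `G` and meeting `G`
is contained in `G`. -/
lemma subset_of_preconnected_disjoint_frontier {G s : Set ℂ} (hGo : IsOpen G)
    (hs : IsPreconnected s) (hdisj : ∀ w ∈ s, w ∉ frontier G) {a : ℂ}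
    (ha : a ∈ s) (haG : a ∈ G) : s ⊆ G := by
  have hsub : s ⊆ interior G ∪ interior Gᶜ := by
    intro w hw
    by_cases hc : w ∈ closure G
    · refine Or.inl ?_
      by_contra hint
      exact hdisj w hw ⟨hc, hint⟩
    · exact Or.inr (by rwa [interior_compl, Set.mem_compl_iff])
  have hdj : Disjoint (interior G) (interior Gᶜ) := by
    rw [interior_compl]
    exact Set.disjoint_left.2 fun z hz hz' => hz' (subset_closure (interior_subset hz))
  have h := hs.subset_left_of_subset_union isOpen_interior isOpen_interior hdj hsub
    ⟨a, ha, by rwa [hGo.interior_eq]⟩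
  exact fun z hz => interior_subset (h hz)

/-- For a domain `G ⊆ ℂ` and `f` holomorphic on `G`, `f ∈ H_e(G)`
iff for every `a ∈ G` the radius of convergence of the Taylor series of `f` at
`a` equals `dist(a, ∂G)`. -/
theorem holExact_iff_taylorRadius_eq_dist_boundary
    (G : Set ℂ) (hG : IsDomain' G) (f : ℂ → ℂ) (hf : DifferentiableOn ℂ f G) :
    HolExact G f ↔ ∀ a ∈ G, taylorRadius f a = EMetric.infEdist a (frontier G) := by
  obtain ⟨hGo, hGc, hGne⟩ := hG
  -- The unconditional lower bound: `infEdist a (frontier G) ≤ taylorRadius f a`.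
  have lower : ∀ a ∈ G, EMetric.infEdist a (frontier G) ≤ taylorRadius f a := by
    intro a ha
    refine ENNReal.le_of_forall_nnreal_lt fun R hR => ?_
    rcases eq_or_lt_of_le (zero_le : (0 : ℝ≥0) ≤ R) with h0 | h0
    · simp [← h0]
    -- the closed ball of radius R is inside G
    have hball : Metric.closedBall a (R : ℝ) ⊆ G := by
      refine subset_of_preconnected_disjoint_frontier hGo
        (convex_closedBall a (R : ℝ)).isPreconnected ?_ (Metric.mem_closedBall_self R.2) ha
      intro w hw hwf
      have h1 : EMetric.infEdist a (frontier G) ≤ edist a w :=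
        EMetric.infEdist_le_edist_of_mem hwf
      have h2 : edist a w ≤ (R : ℝ≥0∞) := by
        rw [edist_dist, ← ENNReal.ofReal_coe_nnreal]
        exact ENNReal.ofReal_le_ofReal (by rwa [dist_comm, ← Metric.mem_closedBall])
      exact absurd (h1.trans h2) (not_le.2 hR)
    exact le_taylorRadius h0 (hf.mono hball)
  constructor
  · -- HolExact → equality
    intro hol a ha
    refine le_antisymm ?_ (lower a ha)
    by_contra hlt
    push_neg at hlt
    -- `f` is analytic at `a` with some power series `p`
    obtain ⟨p, hp⟩ := hf.analyticAt (hGo.mem_nhds ha)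
    rw [taylorRadius_eq hp] at hlt
    obtain ⟨ρ, hρ₁, hρ₂⟩ := ENNReal.lt_iff_exists_nnreal_btwn.1 hlt
    have hρpos : (0 : ℝ) < (ρ : ℝ) := by
      have : (0 : ℝ≥0∞) < (ρ : ℝ≥0∞) := lt_of_le_of_lt zero_le hρ₁
      exact_mod_cast this
    have hradpos : 0 < p.radius := lt_trans (lt_of_le_of_lt zero_le hρ₁) hρ₂
    -- the extension g
    set g : ℂ → ℂ := fun z => p.sum (z - a) with hgdef
    have hgball : HasFPowerSeriesOnBall g p a p.radius :=
      { r_le := le_rfl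
        r_pos := hradpos
        hasSum := fun {y} hy => by simpa [hgdef] using p.hasSum hy }
    obtain ⟨r, hpr⟩ := hp
    -- choose a small radius for G₂
    obtain ⟨εr, hεr0, hεrr⟩ := ENNReal.lt_iff_exists_nnreal_btwn.1 hpr.r_pos
    have hεrpos : (0 : ℝ) < (εr : ℝ) := by exact_mod_cast hεr0
    obtain ⟨ε₀, hε₀, hball₀⟩ := Metric.isOpen_iff.1 hGo a ha
    set ε : ℝ := min ε₀ (min (εr : ℝ) (ρ : ℝ)) with hεdef
    have hεpos : 0 < ε := lt_min hε₀ (lt_min hεrpos hρpos)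
    -- f = g on the small ball
    have heq : Set.EqOn g f (Metric.ball a ε) := by
      intro z hz
      have hz' : dist z a < ε := Metric.mem_ball.1 hz
      have hy : (z - a) ∈ Metric.eball (0 : ℂ) r := by
        rw [Metric.mem_eball, edist_zero_right, enorm_eq_nnnorm]
        refine lt_trans ?_ hεrr
        rw [ENNReal.coe_lt_coe, ← NNReal.coe_lt_coe, coe_nnnorm]
        calc ‖z - a‖ = dist z a := by rw [dist_eq_norm]
        _ < ε := hz'
        _ ≤ (εr : ℝ) := (min_le_right _ _).trans (min_le_left _ _)
      have := hpr.sum hy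
      rw [add_sub_cancel] at this
      exact this.symm
    -- the frontier point inside the big ball
    obtain ⟨x, hxfr, hxd⟩ := EMetric.infEdist_lt_iff.1 hρ₁
    -- assemble the contradiction with HolExact
    refine absurd ?_ hol
    refine ⟨Metric.ball a (ρ : ℝ), Metric.ball a ε, g, Metric.isOpen_ball, ?_,
      Metric.isOpen_ball, ?_, ?_, ?_, ?_, heq⟩
    · exact (convex_ball a (ρ : ℝ)).isConnected ⟨a, Metric.mem_ball_self hρpos⟩
    · exact (convex_ball a ε).isConnected ⟨a, Metric.mem_ball_self hεpos⟩
    · intro z hz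
      have hz' : dist z a < ε := Metric.mem_ball.1 hz
      constructor
      · exact hball₀ (Metric.mem_ball.2 (lt_of_lt_of_le hz' (min_le_left _ _)))
      · exact Metric.mem_ball.2 (lt_of_lt_of_le hz'
          ((min_le_right _ _).trans (min_le_right _ _)))
    · intro hsub
      have hxball : x ∈ Metric.ball a (ρ : ℝ) := by
        rw [Metric.mem_ball, dist_comm, ← ENNReal.ofReal_lt_ofReal_iff hρpos,
          ← edist_dist, ENNReal.ofReal_coe_nnreal]
        exact hxd
      have hxG : x ∈ G := hsub hxball
      exact Set.disjoint_left.1 (disjoint_frontier_iff_isOpen.2 hGo) hxfr hxG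
    · -- g is differentiable on the ball of radius ρ
      refine (hgball.differentiableOn).mono ?_
      intro z hz
      rw [EMetric.mem_ball, edist_dist]
      refine lt_trans ?_ hρ₂
      rw [← ENNReal.ofReal_coe_nnreal]
      exact ENNReal.ofReal_lt_ofReal_iff_of_nonneg dist_nonneg |>.2 (Metric.mem_ball.1 hz)
  · -- equality at every point → HolExact
    intro hrad
    rintro ⟨G₁, G₂, g, hG₁o, hG₁c, hG₂o, hG₂c, hG₂sub, hG₁nsub, hg, hgf⟩
    obtain ⟨x, hx⟩ := hG₂c.nonempty
    have hxΩ : x ∈ G ∩ G₁ := hG₂sub hx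
    set Ω : Set ℂ := G ∩ G₁ with hΩdef
    have hΩo : IsOpen Ω := hGo.inter hG₁o
    set C : Set ℂ := connectedComponentIn Ω x with hCdef
    have hCo : IsOpen C := hΩo.connectedComponentIn
    have hCpre : IsPreconnected C := isPreconnected_connectedComponentIn
    have hxC : x ∈ C := mem_connectedComponentIn hxΩ
    have hCsub : C ⊆ Ω := connectedComponentIn_subset _ _
    have hCG : C ⊆ G := fun z hz => (hCsub hz).1
    have hCG₁ : C ⊆ G₁ := fun z hz => (hCsub hz).2
    -- identity theorem: f = g on C
    have hfg_C : Set.EqOn f g C := by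
      have hfa : AnalyticOnNhd ℂ f C := (hf.mono hCG).analyticOnNhd hCo
      have hga : AnalyticOnNhd ℂ g C := (hg.mono hCG₁).analyticOnNhd hCo
      have hev : f =ᶠ[nhds x] g := by
        filter_upwards [hG₂o.mem_nhds hx] with z hz
        exact (hgf hz).symm
      exact hfa.eqOn_of_preconnected_of_eventuallyEq hga hCpre hxC hev
    -- points of Ω in the closure of C are in C
    have habs : ∀ c ∈ Ω, c ∈ closure C → c ∈ C := by
      intro c hcΩ hccl
      obtain ⟨δ, hδ, hball⟩ := Metric.isOpen_iff.1 hΩo c hcΩ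
      obtain ⟨q, hqC, hq⟩ := Metric.mem_closure_iff.1 hccl δ hδ
      have hqball : q ∈ Metric.ball c δ := by
        rw [Metric.mem_ball, dist_comm]; exact hq
      have h1 : Metric.ball c δ ⊆ connectedComponentIn Ω q :=
        (convex_ball c δ).isPreconnected.subset_connectedComponentIn hqball hball
      have h2 : connectedComponentIn Ω q = C := (connectedComponentIn_eq hqC).symm
      rw [← h2]
      exact h1 (Metric.mem_ball_self hδ)
    -- there is a point of G₁ on the frontier of C
    have hexists : ∃ c ∈ G₁, c ∈ frontier C := by
      by_contra hno
      push_neg at hno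
      have hsub : G₁ ⊆ C ∪ (closure C)ᶜ := by
        intro w hw
        by_cases h : w ∈ closure C
        · refine Or.inl ?_
          have hwf : w ∉ frontier C := hno w hw
          by_contra hwC
          exact hwf ⟨h, by rwa [hCo.interior_eq]⟩
        · exact Or.inr h
      have hdj : Disjoint C ((closure C)ᶜ) :=
        Set.disjoint_left.2 fun z hz hz' => hz' (subset_closure hz)
      have h := hG₁c.isPreconnected.subset_left_of_subset_union hCo
        (isClosed_closure.isOpen_compl) hdj hsub ⟨x, hxΩ.2, hxC⟩
      exact hG₁nsub (h.trans hCG)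
    obtain ⟨c, hcG₁, hcfr⟩ := hexists
    have hcnC : c ∉ C := fun h => hcfr.2 (by rwa [hCo.interior_eq])
    have hcnG : c ∉ G := fun hcG => hcnC (habs c ⟨hcG, hcG₁⟩ hcfr.1)
    have hcfrG : c ∈ frontier G :=
      ⟨closure_mono hCG hcfr.1, fun hint => hcnG (by rwa [hGo.interior_eq] at hint)⟩
    -- a small ball around c inside G₁, and a point q of C close to c
    obtain ⟨δ, hδ, hballδ⟩ := Metric.isOpen_iff.1 hG₁o c hcG₁
    obtain ⟨q, hqC, hqc⟩ := Metric.mem_closure_iff.1 hcfr.1 (δ / 4) (by positivity)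
    have hqG : q ∈ G := hCG hqC
    -- g is differentiable on the closed ball of radius δ/2 around q
    have hsubball : Metric.closedBall q (δ / 2) ⊆ Metric.ball c δ := by
      intro w hw
      rw [Metric.mem_ball]
      calc dist w c ≤ dist w q + dist q c := dist_triangle _ _ _
        _ < δ / 2 + δ / 4 := by
            refine add_lt_add_of_le_of_lt (Metric.mem_closedBall.1 hw) ?_
            rwa [dist_comm]
        _ < δ := by linarith
    have hgd : DifferentiableOn ℂ g (Metric.closedBall q (δ / 2)) :=
      hg.mono (hsubball.trans hballδ)
    -- Taylor radius of g (hence of f) at q is at least δ/2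
    set R : ℝ≥0 := Real.toNNReal (δ / 2) with hRdef
    have hRpos : 0 < R := Real.toNNReal_pos.2 (by positivity)
    have hRcoe : (R : ℝ) = δ / 2 := Real.coe_toNNReal _ (by positivity)
    have htrg : (R : ℝ≥0∞) ≤ taylorRadius g q := by
      refine le_taylorRadius hRpos ?_
      rwa [hRcoe]
    have hev : f =ᶠ[nhds q] g := by
      filter_upwards [hCo.mem_nhds hqC] with z hz
      exact hfg_C hz
    have htreq : taylorRadius f q = taylorRadius g q := by
      unfold taylorRadius
      congr 1
      funext n
      rw [hev.iteratedDeriv_eq n]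
    -- but the distance from q to the frontier is less than δ/4
    have hinf : EMetric.infEdist q (frontier G) < (R : ℝ≥0∞) := by
      calc EMetric.infEdist q (frontier G) ≤ edist q c :=
            EMetric.infEdist_le_edist_of_mem hcfrG
        _ = ENNReal.ofReal (dist q c) := edist_dist _ _
        _ < ENNReal.ofReal (δ / 2) := by
            refine (ENNReal.ofReal_lt_ofReal_iff (by positivity)).2 ?_
            rw [dist_comm]; linarith
        _ = (R : ℝ≥0∞) := by rw [hRdef, ENNReal.ofReal]
    rw [← hrad q hqG, htreq] at hinf
    exact absurd htrg (not_le.2 hinf)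
end

section
/- Let G ⊆ ℂ be a domain whose boundary ∂G has no isolated points, let f ∈ H_{we}(G) ∩ A¹(G), and let φ be a nonconstant entire function. Then φ ∘ f ∈ H_{we}(G). -/
/-- `f ∈ H_{we}(G)`: `f` is holomorphic on `G` and has no holomorphic extension
to any domain strictly containing `G`. -/
def HolWeakExact (G : Set ℂ) (f : ℂ → ℂ) : Prop :=
  DifferentiableOn ℂ f G ∧
  ¬ ∃ (G₁ : Set ℂ) (g : ℂ → ℂ),
      IsOpen G₁ ∧ IsConnected G₁ ∧ G ⊆ G₁ ∧ G ≠ G₁ ∧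
      DifferentiableOn ℂ g G₁ ∧ Set.EqOn g f G

open Set Filter Metric Topology

/-- A constant function cannot be weakly exact on a proper domain. -/
lemma holWeakExact_aux_const (G : Set ℂ) (hGne : G ≠ Set.univ)
    (f : ℂ → ℂ) (hf : HolWeakExact G f) (c : ℂ) (hc : ∀ z ∈ G, f z = c) : False := by
  exact hf.2 ⟨Set.univ, fun _ => c, isOpen_univ, isConnected_univ, subset_univ _, hGne,
    (differentiable_const c).differentiableOn, fun z hz => (hc z hz).symm⟩

/-- If `f` extends holomorphically to a ball around a boundary point, then `f` is not
weakly exact. -/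
lemma holWeakExact_aux_glue (G : Set ℂ) (hGopen : IsOpen G) (hGconn : IsConnected G)
    (f : ℂ → ℂ) (hf : HolWeakExact G f) (q : ℂ) (hq : q ∈ frontier G)
    (δ : ℝ) (hδ : 0 < δ) (F : ℂ → ℂ)
    (hF : ∀ z ∈ Metric.ball q δ, DifferentiableAt ℂ F z)
    (hFe : Set.EqOn F f (G ∩ Metric.ball q δ)) : False := by
  classical
  set W := Metric.ball q δ with hW
  have hqG : q ∉ G := by
    intro h
    have := hGopen.frontier_eq ▸ hq
    exact this.2 h
  have hqW : q ∈ W := Metric.mem_ball_self hδ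
  have hqcl : q ∈ closure G := frontier_subset_closure hq
  -- h' agrees with f on G and with F on W
  set h' : ℂ → ℂ := G.piecewise f F with hh'
  have hfG : Set.EqOn h' f G := fun z hz => Set.piecewise_eq_of_mem _ _ _ hz
  have hFW : Set.EqOn h' F W := by
    intro z hz
    by_cases hzG : z ∈ G
    · show G.piecewise f F z = F z
      rw [Set.piecewise_eq_of_mem _ _ _ hzG]
      exact (hFe ⟨hzG, hz⟩).symm
    · exact Set.piecewise_eq_of_notMem _ _ _ hzG
  -- intersection nonempty
  have hint : (G ∩ W).Nonempty := by
    rcases Metric.mem_closure_iff.1 hqcl δ hδ with ⟨y, hyG, hyd⟩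
    refine ⟨y, hyG, ?_⟩
    rw [Metric.mem_ball, dist_comm]
    exact hyd
  have hWconn : IsConnected W := ⟨Metric.nonempty_ball.2 hδ, (convex_ball q δ).isPreconnected⟩
  refine hf.2 ⟨G ∪ W, h', hGopen.union Metric.isOpen_ball,
    IsConnected.union hint hGconn hWconn, subset_union_left, ?_, ?_, hfG⟩
  · intro h
    apply hqG
    rw [h]
    exact Or.inr hqW
  · intro z hz
    apply DifferentiableAt.differentiableWithinAt
    rcases hz with hzG | hzW
    · have hev : h' =ᶠ[nhds z] f := eventually_of_mem (hGopen.mem_nhds hzG) hfG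
      exact (hf.1.differentiableAt (hGopen.mem_nhds hzG)).congr_of_eventuallyEq hev
    · have hev : h' =ᶠ[nhds z] F := eventually_of_mem (Metric.isOpen_ball.mem_nhds hzW) hFW
      exact (hF z hzW).congr_of_eventuallyEq hev

/-- Let `G ⊆ ℂ` be a domain whose boundary has no isolated points,
let `f ∈ H_{we}(G) ∩ A¹(G)` (i.e. `f` and `f'` extend continuously to `Ḡ`), and
let `φ` be a nonconstant entire function.  Then `φ ∘ f ∈ H_{we}(G)`. -/
theorem comp_entire_holWeakExact
    (G : Set ℂ) (hGopen : IsOpen G) (hGconn : IsConnected G) (hGne : G ≠ Set.univ)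
    (hperf : ∀ z ∈ frontier G, Filter.NeBot (nhdsWithin z (frontier G \ {z})))
    (f : ℂ → ℂ) (hf : HolWeakExact G f)
    (f₀ f₁ : ℂ → ℂ)
    (hf₀ : ContinuousOn f₀ (closure G)) (hf₀e : Set.EqOn f₀ f G)
    (hf₁ : ContinuousOn f₁ (closure G)) (hf₁e : Set.EqOn f₁ (deriv f) G)
    (φ : ℂ → ℂ) (hφ : Differentiable ℂ φ) (hφnc : ¬ ∃ c : ℂ, ∀ z, φ z = c) :
    HolWeakExact G (φ ∘ f) := by
  classical
  have hφa : AnalyticOnNhd ℂ φ Set.univ := hφ.differentiableOn.analyticOnNhd isOpen_univ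
  -- strict derivative of φ everywhere
  have hst : ∀ x : ℂ, HasStrictDerivAt φ (deriv φ x) x := by
    intro x
    obtain ⟨p, hp⟩ := hφa x (mem_univ x)
    have := hp.hasStrictDerivAt
    rwa [← hp.deriv] at this
  have hφ'a : AnalyticOnNhd ℂ (deriv φ) Set.univ := hφa.deriv
  have hφ'c : Continuous (deriv φ) := by
    rw [continuous_iff_continuousAt]
    exact fun x => (hφ'a x (mem_univ x)).differentiableAt.continuousAt
  constructor
  · exact hφ.comp_differentiableOn hf.1
  rintro ⟨G₁, g, hG₁open, hG₁conn, hsub, hne, hg, hgeq⟩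
  -- `f` is not constant on `G`
  have hfnc : ¬ ∃ c : ℂ, ∀ z ∈ G, f z = c := by
    rintro ⟨c, hc⟩
    exact holWeakExact_aux_const G hGne f hf c hc
  -- there is a boundary point of `G` inside `G₁`
  have hbd : ∃ q, q ∈ frontier G ∧ q ∈ G₁ := by
    by_contra h
    push_neg at h
    have hcover : G₁ ⊆ G ∪ (closure G)ᶜ := by
      intro z hz
      by_cases hz' : z ∈ closure G
      · left
        by_contra hzG
        exact h z (by rw [hGopen.frontier_eq]; exact ⟨hz', hzG⟩) hz
      · exact Or.inr hz'
    have h1 : (G₁ ∩ G).Nonempty := by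
      obtain ⟨x, hx⟩ := hGconn.nonempty
      exact ⟨x, hsub hx, hx⟩
    have h2 : (G₁ ∩ (closure G)ᶜ).Nonempty := by
      have : ∃ z, z ∈ G₁ ∧ z ∉ G := by
        by_contra h'
        push_neg at h'
        exact hne (Set.Subset.antisymm hsub fun z hz => h' z hz)
      obtain ⟨z, hz₁, hzG⟩ := this
      refine ⟨z, hz₁, fun hzc => ?_⟩
      exact h z (by rw [hGopen.frontier_eq]; exact ⟨hzc, hzG⟩) hz₁
    obtain ⟨z, hz₁, hzG, hzc⟩ :=
      hG₁conn.isPreconnected G (closure G)ᶜ hGopen isClosed_closure.isOpen_compl hcover h1 h2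
    exact hzc (subset_closure hzG)
  -- boundary values of g
  have hgval : ∀ q, q ∈ frontier G → q ∈ G₁ → g q = φ (f₀ q) := by
    intro q hq hq₁
    have hqcl : q ∈ closure G := frontier_subset_closure hq
    have hnb : (nhdsWithin q G).NeBot := mem_closure_iff_nhdsWithin_neBot.1 hqcl
    have t1 : Tendsto g (nhdsWithin q G) (nhds (g q)) :=
      ((hg.differentiableAt (hG₁open.mem_nhds hq₁)).continuousAt).tendsto.mono_left
        nhdsWithin_le_nhds
    have t2 : Tendsto (fun z => φ (f₀ z)) (nhdsWithin q G) (nhds (φ (f₀ q))) := by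
      have := (hφ.continuous.continuousAt.tendsto).comp
        (((hf₀ q hqcl).tendsto).mono_left (nhdsWithin_mono q subset_closure))
      exact this
    have heq : ∀ᶠ z in nhdsWithin q G, g z = φ (f₀ z) := by
      filter_upwards [self_mem_nhdsWithin] with z hz
      rw [hgeq hz, Function.comp_apply, hf₀e hz]
    exact tendsto_nhds_unique (t1.congr' heq) t2
  by_cases hA : ∃ q, q ∈ frontier G ∧ q ∈ G₁ ∧ deriv φ (f₀ q) ≠ 0
  · -- Case A: invert φ near f₀ q
    obtain ⟨q, hq, hq₁, hd⟩ := hA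
    have hqcl : q ∈ closure G := frontier_subset_closure hq
    set w₀ := f₀ q with hw₀
    have hsfd := (hst w₀).hasStrictFDerivAt_equiv hd
    set H := HasStrictFDerivAt.toOpenPartialHomeomorph φ hsfd with hH
    have hcoe : (H : ℂ → ℂ) = φ := HasStrictFDerivAt.toOpenPartialHomeomorph_coe hsfd
    have hsrc : w₀ ∈ H.source := HasStrictFDerivAt.mem_toOpenPartialHomeomorph_source hsfd
    have htgt : φ w₀ ∈ H.target := by
      have := H.map_source hsrc
      rwa [hcoe] at this
    set ψ : ℂ → ℂ := ⇑H.symm with hψ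
    have hψw₀ : ψ (φ w₀) = w₀ := by
      have := H.left_inv hsrc
      rwa [hcoe] at this
    -- the open set where ψ is a holomorphic inverse
    set U : Set ℂ := {w | deriv φ w ≠ 0} with hU
    have hUopen : IsOpen U := isOpen_compl_singleton.preimage hφ'c
    set T : Set ℂ := H.target ∩ ψ ⁻¹' U with hT
    have hTopen : IsOpen T := H.continuousOn_symm.isOpen_inter_preimage H.open_target hUopen
    have hφw₀T : φ w₀ ∈ T := ⟨htgt, by rw [Set.mem_preimage, hψw₀]; exact hd⟩
    -- ψ is differentiable at each point of T
    have hψdiff : ∀ y ∈ T, DifferentiableAt ℂ ψ y := by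
      rintro y ⟨hy₁, hy₂⟩
      have hψc : ContinuousAt ψ y :=
        H.continuousOn_symm.continuousAt (H.open_target.mem_nhds hy₁)
      have hfg : ∀ᶠ y' in nhds y, φ (ψ y') = y' := by
        filter_upwards [H.open_target.mem_nhds hy₁] with y' hy'
        have := H.right_inv hy'
        rwa [hcoe] at this
      exact HasDerivAt.differentiableAt (HasStrictDerivAt.hasDerivAt (HasStrictDerivAt.of_local_left_inverse hψc (hst (ψ y)) hy₂ hfg))
    -- choose δ
    have hgq : g q = φ w₀ := hgval q hq hq₁
    have hΩ : IsOpen (G₁ ∩ g ⁻¹' T) := hg.continuousOn.isOpen_inter_preimage hG₁open hTopen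
    have hqΩ : q ∈ G₁ ∩ g ⁻¹' T := ⟨hq₁, by rw [Set.mem_preimage, hgq]; exact hφw₀T⟩
    obtain ⟨δ₂, hδ₂, hball₂⟩ := Metric.isOpen_iff.1 hΩ q hqΩ
    have hsrc_nhds : f₀ ⁻¹' H.source ∈ nhdsWithin q (closure G) :=
      (hf₀ q hqcl) (H.open_source.mem_nhds hsrc)
    obtain ⟨δ₁, hδ₁, hball₁⟩ := Metric.mem_nhdsWithin_iff.1 hsrc_nhds
    set δ := min δ₁ δ₂ with hδdef
    have hδ : 0 < δ := lt_min hδ₁ hδ₂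
    refine holWeakExact_aux_glue G hGopen hGconn f hf q hq δ hδ (ψ ∘ g) ?_ ?_
    · intro z hz
      have hz₂ : z ∈ Metric.ball q δ₂ := Metric.ball_subset_ball (min_le_right _ _) hz
      have hzΩ := hball₂ hz₂
      exact (hψdiff (g z) hzΩ.2).comp z (hg.differentiableAt (hG₁open.mem_nhds hzΩ.1))
    · rintro z ⟨hzG, hzb⟩
      have hz₁ : z ∈ Metric.ball q δ₁ := Metric.ball_subset_ball (min_le_left _ _) hzb
      have hfz : f₀ z ∈ H.source := hball₁ ⟨hz₁, subset_closure hzG⟩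
      have : g z = φ (f z) := hgeq hzG
      rw [Function.comp_apply, this, ← hf₀e hzG]
      have := H.left_inv hfz
      rwa [hcoe] at this
  · -- Case B: deriv φ (f₀ ·) vanishes on the boundary inside G₁, so g is constant
    push_neg at hA
    obtain ⟨p, hp, hp₁⟩ := hbd
    have hpcl : p ∈ closure G := frontier_subset_closure hp
    set w₀ := f₀ p with hw₀
    -- zeros of deriv φ are isolated at w₀
    have hever : ∀ᶠ z in nhdsWithin w₀ {w₀}ᶜ, deriv φ z ≠ 0 := by
      rcases (hφ'a w₀ (mem_univ w₀)).eventually_eq_zero_or_eventually_ne_zero with h | h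
      · exfalso
        have hzero : ∀ x, deriv φ x = 0 := by
          have := hφ'a.eqOn_of_preconnected_of_eventuallyEq analyticOnNhd_const
            isPreconnected_univ (mem_univ w₀) h
          exact fun x => this (mem_univ x)
        exact hφnc ⟨φ 0, fun z => is_const_of_deriv_eq_zero hφ hzero z 0⟩
      · exact h
    have hev : ∀ᶠ z in nhds w₀, z ≠ w₀ → deriv φ z ≠ 0 := by
      rwa [eventually_nhdsWithin_iff] at hever
    -- choose δ
    have ht_nhds : f₀ ⁻¹' {z | z ≠ w₀ → deriv φ z ≠ 0} ∈ nhdsWithin p (closure G) :=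
      (hf₀ p hpcl) hev
    obtain ⟨δ₁, hδ₁, hball₁⟩ := Metric.mem_nhdsWithin_iff.1 ht_nhds
    obtain ⟨δ₂, hδ₂, hball₂⟩ := Metric.isOpen_iff.1 hG₁open p hp₁
    set δ := min δ₁ δ₂ with hδdef
    have hδ : 0 < δ := lt_min hδ₁ hδ₂
    -- on the boundary near p, g equals φ w₀
    have hkey : ∀ x, x ∈ frontier G → x ∈ Metric.ball p δ → g x = φ w₀ := by
      intro x hx hxb
      have hx₁ : x ∈ G₁ := hball₂ (Metric.ball_subset_ball (min_le_right _ _) hxb)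
      have hxcl : x ∈ closure G := frontier_subset_closure hx
      have hx0 : deriv φ (f₀ x) = 0 := hA x hx hx₁
      have hfx : f₀ x ∈ {z | z ≠ w₀ → deriv φ z ≠ 0} :=
        hball₁ ⟨Metric.ball_subset_ball (min_le_left _ _) hxb, hxcl⟩
      have hfxw : f₀ x = w₀ := by
        by_contra h
        exact hfx h hx0
      rw [hgval x hx hx₁, hfxw]
    -- frequently equal near p
    have hfreq : ∃ᶠ z in nhdsWithin p {p}ᶜ, g z = φ w₀ := by
      have hnb := hperf p hp
      have hev' : ∀ᶠ z in nhdsWithin p (frontier G \ {p}), g z = φ w₀ := by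
        filter_upwards [self_mem_nhdsWithin,
          nhdsWithin_le_nhds (Metric.ball_mem_nhds p hδ)] with z hz hzb
        exact hkey z hz.1 hzb
      exact (hev'.frequently).filter_mono
        (nhdsWithin_mono p (fun z hz => hz.2 : frontier G \ {p} ⊆ {p}ᶜ))
    have hgconst : Set.EqOn g (fun _ => φ w₀) G₁ :=
      (hg.analyticOnNhd hG₁open).eqOn_of_preconnected_of_frequently_eq analyticOnNhd_const
        hG₁conn.isPreconnected hp₁ hfreq
    -- φ ∘ f is constant on G
    have hφf : ∀ z ∈ G, φ (f z) = φ w₀ := by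
      intro z hz
      have := hgconst (hsub hz)
      rw [hgeq hz] at this
      exact this
    -- f is constant or open; both lead to contradictions
    rcases (hf.1.analyticOnNhd hGopen).is_constant_or_isOpen hGconn.isPreconnected with
      ⟨v, hv⟩ | hopen
    · exact hfnc ⟨v, hv⟩
    · have himg : IsOpen (f '' G) := hopen G subset_rfl hGopen
      obtain ⟨z₀, hz₀⟩ := hGconn.nonempty
      have hv : f z₀ ∈ f '' G := ⟨z₀, hz₀, rfl⟩
      obtain ⟨ε, hε, hball⟩ := Metric.isOpen_iff.1 himg (f z₀) hv
      have hφeq : ∀ᶠ w in nhds (f z₀), φ w = φ w₀ := by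
        filter_upwards [Metric.ball_mem_nhds (f z₀) hε] with w hw
        obtain ⟨z, hzG, rfl⟩ := hball hw
        exact hφf z hzG
      have := hφa.eqOn_of_preconnected_of_eventuallyEq analyticOnNhd_const
        isPreconnected_univ (mem_univ (f z₀)) hφeq
      exact hφnc ⟨φ w₀, fun z => this (mem_univ z)⟩
end

section
/- Let G ⊆ ℂ be a domain, (a_n)_{n≥1} a sequence in G with the property that for every a ∈ G and every r > dist(a, ∂G), the connected component of B(a,r) ∩ G containing a contains infinitely many of the a_n. If F ∈ H(G) satisfies |F(a_n)| → +∞ as n → ∞, then F ∈ H_e(G), i.e., F is holomorphic exactly on G. -/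
/-- Let `G ⊆ ℂ` be a domain and `(a_n)` a sequence in `G` such that
for every `a ∈ G` and every `r > dist(a, ∂G)`, the connected component of
`B(a,r) ∩ G` containing `a` contains infinitely many of the `a_n`.  If
`F ∈ H(G)` satisfies `|F(a_n)| → +∞`, then `F ∈ H_e(G)`. -/
theorem holExact_of_unbounded_on_adapted_sequence
    (G : Set ℂ) (hGopen : IsOpen G) (hGconn : IsConnected G) (hGne : G ≠ Set.univ)
    (a : ℕ → ℂ) (haG : ∀ n, a n ∈ G)
    (hacc : ∀ p ∈ G, ∀ r : ℝ, Metric.infDist p (frontier G) < r →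
      {n : ℕ | a n ∈ connectedComponentIn (Metric.ball p r ∩ G) p}.Infinite)
    (F : ℂ → ℂ) (hF : DifferentiableOn ℂ F G)
    (hFa : Filter.Tendsto (fun n => ‖F (a n)‖) Filter.atTop Filter.atTop) :
    HolExact G F := by
  rintro ⟨G₁, G₂, g, hG₁o, hG₁c, hG₂o, hG₂c, hG₂sub, hG₁nsub, hg, hgF⟩
  obtain ⟨p₀, hp₀⟩ := hG₂c.nonempty
  have hGG₁o : IsOpen (G ∩ G₁) := hGopen.inter hG₁o
  set C : Set ℂ := connectedComponentIn (G ∩ G₁) p₀ with hC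
  have hp₀GG₁ : p₀ ∈ G ∩ G₁ := hG₂sub hp₀
  have hp₀C : p₀ ∈ C := mem_connectedComponentIn hp₀GG₁
  have hCsub : C ⊆ G ∩ G₁ := connectedComponentIn_subset _ _
  have hCo : IsOpen C := hGG₁o.connectedComponentIn
  have hCconn : IsPreconnected C := isPreconnected_connectedComponentIn
  -- every point of `closure C ∩ (G ∩ G₁)` is in `C`
  have hclosC : ∀ x ∈ closure C, x ∈ G ∩ G₁ → x ∈ C := by
    intro x hx hxGG₁
    have hxo : connectedComponentIn (G ∩ G₁) x ∈ nhds x :=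
      (hGG₁o.connectedComponentIn).mem_nhds (mem_connectedComponentIn hxGG₁)
    obtain ⟨y, hyx, hyC⟩ := mem_closure_iff_nhds.mp hx _ hxo
    have h1 : connectedComponentIn (G ∩ G₁) x = connectedComponentIn (G ∩ G₁) y :=
      connectedComponentIn_eq hyx
    have h2 : C = connectedComponentIn (G ∩ G₁) y := connectedComponentIn_eq hyC
    rw [h2, ← h1]
    exact mem_connectedComponentIn hxGG₁
  -- find `w ∈ closure C ∩ G₁` with `w ∉ G`
  have hw : ∃ w ∈ closure C ∩ G₁, w ∉ G := by
    by_contra h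
    push_neg at h
    have hsub : G₁ ⊆ C := by
      apply hG₁c.isPreconnected.subset_left_of_subset_union hCo
        (isClosed_closure.isOpen_compl) (disjoint_compl_right.mono_left subset_closure)
      · intro x hx
        by_cases hxc : x ∈ closure C
        · exact Or.inl (hclosC x hxc ⟨h x ⟨hxc, hx⟩, hx⟩)
        · exact Or.inr hxc
      · exact ⟨p₀, hp₀GG₁.2, hp₀C⟩
    exact hG₁nsub fun x hx => (hCsub (hsub hx)).1
  obtain ⟨w, ⟨hwC, hwG₁⟩, hwG⟩ := hw
  have hwfr : w ∈ frontier G := by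
    refine ⟨?_, by rwa [hGopen.interior_eq]⟩
    exact closure_mono (fun x hx => (hCsub hx).1) hwC
  -- choose a small radius
  obtain ⟨δ, hδ, hδsub⟩ := Metric.isOpen_iff.mp hG₁o w hwG₁
  set ε := δ / 3 with hε
  have hεpos : 0 < ε := by positivity
  obtain ⟨p, hpC, hpw⟩ := Metric.mem_closure_iff.mp hwC ε hεpos
  have hpG : p ∈ G := (hCsub hpC).1
  have hballs : Metric.closedBall p ε ⊆ Metric.ball w δ := by
    intro x hx
    have h1 : dist x p ≤ ε := Metric.mem_closedBall.mp hx
    have h2 : dist x w ≤ dist x p + dist p w := dist_triangle x p w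
    have : dist p w < ε := by rwa [dist_comm] at hpw
    refine Metric.mem_ball.mpr (lt_of_le_of_lt h2 ?_)
    rw [hε] at *
    linarith
  have hinf : Metric.infDist p (frontier G) < ε := by
    calc Metric.infDist p (frontier G) ≤ dist p w := Metric.infDist_le_dist_of_mem hwfr
    _ < ε := by rwa [dist_comm] at hpw
  -- the key component
  set K : Set ℂ := connectedComponentIn (Metric.ball p ε ∩ G) p with hK
  have hKsub : K ⊆ Metric.ball p ε ∩ G := connectedComponentIn_subset _ _
  have hKsubC : K ⊆ C := by
    have h1 : K ⊆ G ∩ G₁ := by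
      intro x hx
      obtain ⟨hx1, hx2⟩ := hKsub hx
      exact ⟨hx2, hδsub (hballs (Metric.ball_subset_closedBall hx1))⟩
    have hpK : p ∈ K :=
      mem_connectedComponentIn ⟨Metric.mem_ball_self hεpos, hpG⟩
    have := (isPreconnected_connectedComponentIn
      (x := p) (F := Metric.ball p ε ∩ G)).subset_connectedComponentIn hpK h1
    rwa [← connectedComponentIn_eq hpC] at this
  -- `F = g` on `C` by the identity theorem
  have hFg : Set.EqOn g F C := by
    have hga : AnalyticOnNhd ℂ g C :=
      (hg.analyticOnNhd hG₁o).mono fun x hx => (hCsub hx).2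
    have hFa' : AnalyticOnNhd ℂ F C :=
      (hF.analyticOnNhd hGopen).mono fun x hx => (hCsub hx).1
    have hev : g =ᶠ[nhds p₀] F :=
      Filter.eventuallyEq_of_mem (hG₂o.mem_nhds hp₀) hgF
    exact hga.eqOn_of_preconnected_of_eventuallyEq hFa' hCconn hp₀C hev
  -- `g` is bounded on the closed ball
  obtain ⟨M, hM⟩ := (isCompact_closedBall p ε).exists_bound_of_continuousOn
    ((hg.continuousOn).mono (fun x hx => hδsub (hballs hx)))
  -- contradiction with `|F (a n)| → ∞`
  have hS := hacc p hpG ε hinf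
  obtain ⟨N, hN⟩ := Filter.eventually_atTop.mp ((Filter.tendsto_atTop.mp hFa) (M + 1))
  obtain ⟨n, hnS, hnN⟩ := Set.Infinite.exists_gt hS N
  have hanK : a n ∈ K := hnS
  have h1 : ‖F (a n)‖ ≤ M := by
    rw [← hFg (hKsubC hanK)]
    have := hM (a n) (Metric.ball_subset_closedBall (hKsub hanK).1)
    simpa using this
  have h2 : M + 1 ≤ ‖F (a n)‖ := hN n hnN.le
  linarith
end

section
/- Let G ⊆ ℂ be a domain, z₀ ∈ ∂G, and F ∈ H(G) such that there is a sequence of points w_l ∈ ∂G converging to points densely near z₀ with the property that the radius of convergence of F at points of G approaching each w_l is 0, in the following precise sense: there exist constants and indices n(p,l) with F^{(j)}(w_l) = c·j!·j^j for all j ≥ n(p,l), c ≠ 0, where F extends C^∞ to the closure. Then F has no holomorphic extension to any open ball B with B ∩ ∂G ≠ ∅ containing some w_l. -/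
/-- Let `G ⊆ ℂ` be a domain and `F ∈ A^∞(G)`, i.e. every derivative
`F^{(j)}` extends continuously to `Ḡ` (the extensions are the `Fj j`).  Suppose
there are boundary points `w l ∈ ∂G` and a constant `c ≠ 0` with
`F^{(j)}(w l) = c · j! · j^j` for all `j ≥ n l`.  Then `F` has no holomorphic
extension to `B ∪ G` for any open ball `B` meeting `∂G` and containing some
`w l`. -/
theorem no_extension_to_ball_of_fast_boundary_derivatives
    (G : Set ℂ) (hGopen : IsOpen G) (hGconn : IsConnected G) (hGne : G ≠ Set.univ)
    (F : ℂ → ℂ) (hF : DifferentiableOn ℂ F G)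
    (Fj : ℕ → ℂ → ℂ)
    (hFj : ∀ j, ContinuousOn (Fj j) (closure G) ∧ Set.EqOn (Fj j) (iteratedDeriv j F) G)
    (w : ℕ → ℂ) (hw : ∀ l, w l ∈ frontier G)
    (c : ℂ) (hc : c ≠ 0) (n : ℕ → ℕ)
    (hval : ∀ l, ∀ j, n l ≤ j → Fj j (w l) = c * (j.factorial : ℂ) * (j : ℂ) ^ j) :
    ∀ (z₀ : ℂ) (r : ℝ), 0 < r → (Metric.ball z₀ r ∩ frontier G).Nonempty →
      (∃ l, w l ∈ Metric.ball z₀ r) →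
      ¬ ∃ g : ℂ → ℂ, DifferentiableOn ℂ g (Metric.ball z₀ r ∪ G) ∧ Set.EqOn g F G := by
  rintro z₀ r hr - ⟨l, hl⟩ ⟨g, hg, hgF⟩
  set U : Set ℂ := Metric.ball z₀ r ∪ G with hU
  have hUopen : IsOpen U := Metric.isOpen_ball.union hGopen
  have hwU : w l ∈ U := Or.inl hl
  have hgan : AnalyticOnNhd ℂ g U := hg.analyticOnNhd hUopen
  have hwc : w l ∈ closure G := (hw l).1
  have hne : (nhdsWithin (w l) G).NeBot := mem_closure_iff_nhdsWithin_neBot.mp hwc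
  -- Step 1: iteratedDeriv j g (w l) = Fj j (w l)
  have key : ∀ j, iteratedDeriv j g (w l) = Fj j (w l) := by
    intro j
    have h1 : ContinuousAt (iteratedDeriv j g) (w l) := by
      rw [iteratedDeriv_eq_iterate]
      exact ((hgan.iterated_deriv j) (w l) hwU).continuousAt
    have heq : Set.EqOn (iteratedDeriv j g) (Fj j) G := by
      intro x hx
      have hev : g =ᶠ[nhds x] F :=
        Filter.eventuallyEq_of_mem (hGopen.mem_nhds hx) hgF
      rw [hev.iteratedDeriv_eq j, (hFj j).2 hx]
    have t1 : Filter.Tendsto (Fj j) (nhdsWithin (w l) G) (nhds (Fj j (w l))) :=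
      ((hFj j).1.continuousWithinAt hwc).mono subset_closure
    have t2 : Filter.Tendsto (Fj j) (nhdsWithin (w l) G)
        (nhds (iteratedDeriv j g (w l))) := by
      refine Filter.Tendsto.congr' ?_ (h1.tendsto.mono_left nhdsWithin_le_nhds)
      filter_upwards [self_mem_nhdsWithin] with x hx using heq hx
    exact tendsto_nhds_unique t2 t1
  -- Step 2: power series of g at w l
  obtain ⟨p, hp⟩ := hgan (w l) hwU
  obtain ⟨R, hR⟩ := hp
  have hRrad : (0 : ENNReal) < p.radius := lt_of_lt_of_le hR.r_pos hR.r_le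
  obtain ⟨ρ, hρ0, hρlt⟩ := ENNReal.lt_iff_exists_nnreal_btwn.mp hRrad
  obtain ⟨C, hC0, hCb⟩ := p.norm_mul_pow_le_of_lt_radius hρlt
  have hρpos : (0 : ℝ) < ρ := by exact_mod_cast hρ0
  -- coefficients of p
  have hcoeff : ∀ j, (j.factorial : ℂ) * p.coeff j = iteratedDeriv j g (w l) := by
    intro j
    have h0 : j.factorial • p.coeff j = iteratedDeriv j g (w l) := by
      rw [iteratedDeriv_eq_iteratedFDeriv]
      exact hR.factorial_smul 1 j
    rw [← h0, nsmul_eq_mul]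
  have hnormp : ∀ j, n l ≤ j → ‖p j‖ = ‖c‖ * (j : ℝ) ^ j := by
    intro j hj
    have h1 : (j.factorial : ℂ) * p.coeff j = c * (j.factorial : ℂ) * (j : ℂ) ^ j := by
      rw [hcoeff j, key j, hval l j hj]
    have hfac : (j.factorial : ℂ) ≠ 0 := by
      exact_mod_cast j.factorial_ne_zero
    have h2 : p.coeff j = c * (j : ℂ) ^ j := by
      apply mul_left_cancel₀ hfac
      rw [h1]; ring
    rw [p.norm_apply_eq_norm_coef, h2]
    simp [norm_mul, norm_pow]
  -- Step 3: contradiction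
  obtain ⟨N, hN⟩ := pow_unbounded_of_one_lt (C / ‖c‖) (by norm_num : (1:ℝ) < 2)
  set j : ℕ := max (n l) (max N (Nat.ceil (2 / (ρ : ℝ)))) with hj
  have hj1 : n l ≤ j := le_max_left _ _
  have hjN : N ≤ j := le_trans (le_max_left _ _) (le_max_right _ _)
  have hjρ : (2 : ℝ) ≤ (j : ℝ) * ρ := by
    have h1 : (Nat.ceil (2 / (ρ : ℝ)) : ℕ) ≤ j :=
      le_trans (le_max_right _ _) (le_max_right _ _)
    have h2 : (2 / (ρ : ℝ)) ≤ (j : ℝ) := le_trans (Nat.le_ceil _) (by exact_mod_cast h1)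
    calc (2 : ℝ) = 2 / (ρ : ℝ) * ρ := by field_simp
    _ ≤ (j : ℝ) * ρ := by nlinarith
  have hcpos : (0 : ℝ) < ‖c‖ := norm_pos_iff.mpr hc
  have hbound := hCb j
  rw [hnormp j hj1] at hbound
  -- ‖c‖ * j^j * ρ^j ≤ C
  have h3 : ‖c‖ * ((j : ℝ) * ρ) ^ j ≤ C := by
    calc ‖c‖ * ((j : ℝ) * ρ) ^ j = ‖c‖ * (j : ℝ) ^ j * (ρ : ℝ) ^ j := by ring
    _ ≤ C := hbound
  have h4 : (2 : ℝ) ^ j ≤ ((j : ℝ) * ρ) ^ j :=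
    pow_le_pow_left₀ (by norm_num) hjρ j
  have h5 : (2 : ℝ) ^ N ≤ (2 : ℝ) ^ j := pow_le_pow_right₀ (by norm_num) hjN
  have h6 : C / ‖c‖ < ((j : ℝ) * ρ) ^ j := lt_of_lt_of_le hN (le_trans h5 h4)
  have h7 : C < ‖c‖ * ((j : ℝ) * ρ) ^ j := by
    rw [div_lt_iff₀ hcpos] at h6
    nlinarith
  linarith
end

section
/- Let X be a Fréchet space and M an infinite dimensional linear subspace of X, and let Y be a closed linear subspace of X with Y ∩ M = {0} and M ⊆ X. Then Y has infinite codimension in the closed subspace X' = closure of M, and consequently X' \ Y is spaceable in X'. -/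
open Set Submodule Cardinal Topology

/-- Intersecting with the kernel of one functional keeps infinite rank. -/
lemma wk_rank_inf_ker {X : Type*} [AddCommGroup X] [Module ℂ X]
    (S : Submodule ℂ X) (hS : Cardinal.aleph0 ≤ Module.rank ℂ S)
    (f : X →ₗ[ℂ] ℂ) : Cardinal.aleph0 ≤ Module.rank ℂ ↥(S ⊓ LinearMap.ker f) := by
  have hker : Submodule.map S.subtype (LinearMap.ker (f.comp S.subtype))
      = S ⊓ LinearMap.ker f := by
    rw [LinearMap.ker_comp, Submodule.map_comap_subtype]
  have e := Submodule.equivMapOfInjective S.subtype (Submodule.injective_subtype S)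
    (LinearMap.ker (f.comp S.subtype))
  rw [hker] at e
  have hrankeq : Module.rank ℂ ↥(LinearMap.ker (f.comp S.subtype))
      = Module.rank ℂ ↥(S ⊓ LinearMap.ker f) := e.rank_eq
  have hrn := LinearMap.lift_rank_range_add_rank_ker (f.comp S.subtype)
  have hrange : Module.rank ℂ ↥(LinearMap.range (f.comp S.subtype)) < Cardinal.aleph0 := by
    refine lt_of_le_of_lt (Submodule.rank_mono le_top) ?_
    rw [rank_top]
    exact Module.rank_lt_aleph0 ℂ ℂ
  by_contra hlt
  push_neg at hlt
  rw [← hrankeq] at hlt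
  have hsum := Cardinal.add_lt_aleph0 (Cardinal.lift_lt_aleph0.mpr hrange)
    (Cardinal.lift_lt_aleph0.mpr hlt)
  rw [hrn] at hsum
  exact absurd (Cardinal.aleph0_le_lift.mpr hS) hsum.2

/-- Intersecting with finitely many kernels keeps infinite rank. -/
lemma wk_rank_inf_kers {X : Type*} [AddCommGroup X] [Module ℂ X]
    (S : Submodule ℂ X) (hS : Cardinal.aleph0 ≤ Module.rank ℂ S)
    (l : List (X →ₗ[ℂ] ℂ)) :
    Cardinal.aleph0 ≤ Module.rank ℂ
      ↥(S ⊓ l.foldr (fun f T => LinearMap.ker f ⊓ T) ⊤) := by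
  induction l with
  | nil => exact le_trans hS (Submodule.rank_mono (le_inf le_rfl le_top))
  | cons f l ih =>
    have heq : S ⊓ (f :: l).foldr (fun f T => LinearMap.ker f ⊓ T) ⊤
        = (S ⊓ l.foldr (fun f T => LinearMap.ker f ⊓ T) ⊤) ⊓ LinearMap.ker f := by
      rw [List.foldr_cons, inf_comm (LinearMap.ker f), ← inf_assoc]
    exact le_trans (wk_rank_inf_ker _ ih f) (Submodule.rank_mono (le_of_eq heq.symm))

lemma wk_mem_foldr {X : Type*} [AddCommGroup X] [Module ℂ X]
    (l : List (X →ₗ[ℂ] ℂ)) (x : X)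
    (hx : x ∈ l.foldr (fun f T => LinearMap.ker f ⊓ T) ⊤) :
    ∀ f ∈ l, f x = 0 := by
  induction l with
  | nil => simp
  | cons g l ih =>
    rw [List.foldr_cons, Submodule.mem_inf] at hx
    intro f hf
    rcases List.mem_cons.mp hf with h | h
    · subst h; exact LinearMap.mem_ker.mp hx.1
    · exact ih hx.2 f h

/-- Sum of a closed submodule and a finite dimensional submodule is closed. -/
lemma wk_isClosed_sup {X : Type*} [AddCommGroup X] [Module ℂ X] [TopologicalSpace X]
    [IsTopologicalAddGroup X] [ContinuousSMul ℂ X]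
    (Y T : Submodule ℂ X) (hY : IsClosed (Y : Set X)) [FiniteDimensional ℂ T] :
    IsClosed ((Y ⊔ T : Submodule ℂ X) : Set X) := by
  haveI : IsClosed (Y : Set X) := hY
  haveI : FiniteDimensional ℂ ↥(T.map Y.mkQ) := Module.Finite.map T Y.mkQ
  have hq : IsClosed ((T.map Y.mkQ : Submodule ℂ (X ⧸ Y)) : Set (X ⧸ Y)) :=
    Submodule.closed_of_finiteDimensional _
  have heq : ((Y ⊔ T : Submodule ℂ X) : Set X)
      = Y.mkQ ⁻¹' ((T.map Y.mkQ : Submodule ℂ (X ⧸ Y)) : Set (X ⧸ Y)) := by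
    ext x
    simp only [SetLike.mem_coe, Set.mem_preimage]
    rw [← Submodule.mem_comap, Submodule.comap_map_eq, Submodule.ker_mkQ, sup_comm]
  rw [heq]
  exact hq.preimage (Submodule.isOpenQuotientMap_mkQ Y).continuous

/-- A continuous linear functional vanishing on a closed subspace, `1` at a given point. -/
lemma wk_exists_functional {X : Type*} [AddCommGroup X] [Module ℂ X] [Module ℝ X]
    [IsScalarTower ℝ ℂ X] [TopologicalSpace X] [IsTopologicalAddGroup X] [ContinuousSMul ℂ X]
    [LocallyConvexSpace ℝ X]
    (W : Submodule ℂ X) (hW : IsClosed (W : Set X)) {x : X} (hx : x ∉ W) :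
    ∃ f : X →L[ℂ] ℂ, (∀ w ∈ W, f w = 0) ∧ f x = 1 := by
  have hconv : Convex ℝ (W : Set X) := (W.restrictScalars ℝ).convex
  obtain ⟨f, u, hfW, hfx⟩ := RCLike.geometric_hahn_banach_closed_point (𝕜 := ℂ) hconv hW hx
  have hu0 : 0 < u := by simpa using hfW 0 W.zero_mem
  have hW0 : ∀ w ∈ W, f w = 0 := by
    intro w hw
    by_contra hz
    have hmem : (((u + 1 : ℝ) : ℂ) * (f w)⁻¹) • w ∈ W := W.smul_mem _ hw
    have h2 := hfW _ hmem
    rw [map_smul, smul_eq_mul, mul_assoc, inv_mul_cancel₀ hz, mul_one] at h2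
    simp at h2
    linarith
  have hfx0 : f x ≠ 0 := by
    intro h0
    rw [h0] at hfx
    simp at hfx
    linarith
  refine ⟨(f x)⁻¹ • f, fun w hw => ?_, ?_⟩
  · simp [hW0 w hw]
  · simp [inv_mul_cancel₀ hfx0]

/-- The span of a countable family is separable. -/
lemma wk_isSeparable_span {X : Type*} [AddCommGroup X] [Module ℂ X] [TopologicalSpace X]
    [IsTopologicalAddGroup X] [ContinuousSMul ℂ X] (v : ℕ → X) :
    TopologicalSpace.IsSeparable ((Submodule.span ℂ (Set.range v) : Submodule ℂ X) : Set X) := by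
  have himg : ∀ m : ℕ, TopologicalSpace.IsSeparable
      ((fun c : Fin m → ℂ => ∑ i, c i • v i) '' Set.univ) := by
    intro m
    refine TopologicalSpace.IsSeparable.image ?_ ?_
    · exact TopologicalSpace.isSeparable_univ_iff.mpr inferInstance
    · exact continuous_finset_sum _ fun i _ => (continuous_apply (i : Fin m)).smul continuous_const
  have hsub : ((Submodule.span ℂ (Set.range v) : Submodule ℂ X) : Set X)
      ⊆ ⋃ m : ℕ, (fun c : Fin m → ℂ => ∑ i, c i • v i) '' Set.univ := by
    intro x hx
    rw [SetLike.mem_coe] at hx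
    obtain ⟨c, hc⟩ := Finsupp.mem_span_range_iff_exists_finsupp.mp hx
    set m := (c.support.sup id) + 1 with hm
    have hsupp : c.support ⊆ Finset.range m := by
      intro i hi
      rw [Finset.mem_range, hm]
      exact Nat.lt_succ_of_le (Finset.le_sup (f := id) hi)
    have hsum : ∑ i ∈ Finset.range m, c i • v i = x := by
      rw [← hc]
      exact (Finsupp.sum_of_support_subset c hsupp (fun i a => a • v i)
        (fun i _ => zero_smul ℂ (v i))).symm
    refine Set.mem_iUnion.mpr ⟨m, ⟨fun i => c (i : ℕ), Set.mem_univ _, ?_⟩⟩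
    show ∑ i : Fin m, c (i : ℕ) • v (i : ℕ) = x
    rw [Fin.sum_univ_eq_sum_range (fun i => c i • v i) m]
    exact hsum
  exact (TopologicalSpace.IsSeparable.iUnion himg).mono hsub

/-- A countable family of closed convex symmetric neighborhoods of zero that
"separates" points from zero. -/
lemma wk_exists_symm_basis {X : Type*} [AddCommGroup X] [Module ℝ X] [TopologicalSpace X]
    [IsTopologicalAddGroup X] [ContinuousSMul ℝ X] [LocallyConvexSpace ℝ X]
    [FirstCountableTopology X] [T1Space X] :
    ∃ S : ℕ → Set X, (∀ n, IsClosed (S n)) ∧ (∀ n, Convex ℝ (S n)) ∧ (∀ n, S n ∈ 𝓝 (0 : X)) ∧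
      (∀ n, ∀ x ∈ S n, -x ∈ S n) ∧ ∀ y : X, y ≠ 0 → ∃ n, (2⁻¹ : ℝ) • y ∉ S n := by
  obtain ⟨U, hU⟩ := (𝓝 (0 : X)).exists_antitone_basis
  have hstep : ∀ n, ∃ s : Set X, IsClosed s ∧ Convex ℝ s ∧ s ∈ 𝓝 (0 : X) ∧
      (∀ x ∈ s, -x ∈ s) ∧ s ⊆ U n := by
    intro n
    obtain ⟨Cn, hCn_mem, hCn_closed, hCn_sub⟩ :=
      exists_mem_nhds_isClosed_subset (hU.1.mem_of_mem trivial)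
    obtain ⟨D, hD_mem, hD_conv, hD_sub⟩ :=
      (locallyConvexSpace_iff_exists_convex_subset_zero ℝ X).mp inferInstance Cn hCn_mem
    have hnegD : -D ∈ 𝓝 (0 : X) := by
      have hc : ContinuousAt (fun x : X => -x) 0 := continuous_neg.continuousAt
      have h2 := hc.preimage_mem_nhds (by rw [neg_zero]; exact hD_mem)
      exact h2
    have hTsymm : -(D ∩ -D) = D ∩ -D := by
      ext z
      simp only [Set.mem_neg, Set.mem_inter_iff, neg_neg]
      tauto
    refine ⟨closure (D ∩ -D), isClosed_closure, (hD_conv.inter hD_conv.neg).closure, ?_, ?_, ?_⟩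
    · exact Filter.mem_of_superset (Filter.inter_mem hD_mem hnegD) subset_closure
    · intro x hx
      have : -x ∈ -closure (D ∩ -D) := Set.neg_mem_neg.mpr hx
      rwa [neg_closure, hTsymm] at this
    · exact (closure_minimal (Set.inter_subset_left.trans hD_sub) hCn_closed).trans hCn_sub
  choose S hcl hconv hmem hsymm hsub using hstep
  refine ⟨S, hcl, hconv, hmem, hsymm, ?_⟩
  intro y hy
  have hy2 : (2⁻¹ : ℝ) • y ≠ 0 := by
    intro h
    apply hy
    have h2 : ((2 : ℝ)) • ((2⁻¹ : ℝ) • y) = y := by rw [smul_smul]; norm_num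
    rw [h, smul_zero] at h2
    exact h2.symm
  have hcompl : ({(2⁻¹ : ℝ) • y}ᶜ : Set X) ∈ 𝓝 (0 : X) :=
    isOpen_compl_singleton.mem_nhds (by simp [Ne.symm hy2])
  obtain ⟨n, -, hsubn⟩ := hU.1.mem_iff.mp hcompl
  refine ⟨n, fun hmem' => ?_⟩
  have := hsubn (hsub n hmem')
  simp at this

/-- Separating functional bounded on a symmetric closed convex neighborhood. -/
lemma wk_exists_B {X : Type*} [AddCommGroup X] [Module ℂ X] [Module ℝ X] [IsScalarTower ℝ ℂ X]
    [TopologicalSpace X] [IsTopologicalAddGroup X] [ContinuousSMul ℂ X] [LocallyConvexSpace ℝ X]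
    (s : Set X) (hcl : IsClosed s) (hconv : Convex ℝ s) (hnb : s ∈ 𝓝 (0 : X))
    (hsym : ∀ x ∈ s, -x ∈ s) (p : X) :
    ∃ B : X →L[ℂ] ℂ, p ∉ s →
      (∀ x ∈ s, |RCLike.re (B x)| ≤ 1) ∧ 1 < RCLike.re (B p) := by
  by_cases hp : p ∈ s
  · exact ⟨0, fun h => absurd hp h⟩
  · obtain ⟨f, u, hfs, hfp⟩ := RCLike.geometric_hahn_banach_closed_point (𝕜 := ℂ) hconv hcl hp
    have hu0 : 0 < u := by simpa using hfs 0 (mem_of_mem_nhds hnb)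
    refine ⟨(u⁻¹ : ℝ) • f, fun _ => ⟨?_, ?_⟩⟩
    · intro x hx
      have h1 : RCLike.re (f x) < u := hfs x hx
      have h2 : -(RCLike.re (f x)) < u := by
        have h3 := hfs (-x) (hsym x hx)
        rw [map_neg, map_neg] at h3
        exact h3
      have habs : |RCLike.re (f x)| ≤ u := abs_le.mpr ⟨by linarith, h1.le⟩
      rw [ContinuousLinearMap.smul_apply, RCLike.smul_re, abs_mul,
        abs_of_pos (inv_pos.mpr hu0)]
      calc u⁻¹ * |RCLike.re (f x)| ≤ u⁻¹ * u :=
            mul_le_mul_of_nonneg_left habs (inv_pos.mpr hu0).le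
        _ = 1 := inv_mul_cancel₀ hu0.ne'
    · rw [ContinuousLinearMap.smul_apply, RCLike.smul_re]
      have h4 := mul_lt_mul_of_pos_left hfp (inv_pos.mpr hu0)
      rwa [inv_mul_cancel₀ hu0.ne'] at h4

/-- A biorthogonal family is linearly independent. -/
lemma wk_biorth_indep {X : Type*} [AddCommGroup X] [Module ℂ X] [TopologicalSpace X] (u : ℕ → X)
    (f : ℕ → (X →L[ℂ] ℂ)) (h : ∀ k s, f k (u s) = if k = s then 1 else 0) :
    LinearIndependent ℂ u := by
  rw [linearIndependent_iff']
  intro t g hsum i hi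
  have h2 := congrArg (f i) hsum
  rw [map_sum, map_zero] at h2
  simp only [map_smul, smul_eq_mul, h, mul_ite, mul_one, mul_zero, Finset.sum_ite_eq] at h2
  rwa [if_pos hi] at h2

/-- Dependent choice for constructing sequences recursively. -/
lemma wk_nat_choice {P : Type*} [Nonempty P] (Good : ℕ → (ℕ → P) → P → Prop)
    (hmono : ∀ m (w w' : ℕ → P), (∀ k, k < m → w k = w' k) → ∀ p, Good m w p → Good m w' p)
    (hex : ∀ m (w : ℕ → P), ∃ p, Good m w p) :
    ∃ w : ℕ → P, ∀ m, Good m w (w m) := by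
  classical
  let step : ∀ m : ℕ, (∀ k, k < m → P) → P := fun m prev =>
    Classical.choose (hex m fun k => if h : k < m then prev k h else Classical.arbitrary P)
  let w : ℕ → P := fun m => (Nat.lt_wfRel.wf).fix step m
  have hw : ∀ m, w m = step m fun k _ => w k := fun m => WellFounded.fix_eq _ _ _
  refine ⟨w, fun m => ?_⟩
  have hspec := Classical.choose_spec
    (hex m fun k => if h : k < m then w k else Classical.arbitrary P)
  have hG : Good m (fun k => if h : k < m then w k else Classical.arbitrary P) (w m) := by
    rw [hw m]
    exact hspec
  exact hmono m _ w (fun k hk => by simp [hk]) _ hG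

/-- Let `X` be a Fréchet space (complete metrizable locally convex
topological vector space over `ℂ`), `M` an infinite dimensional subspace and `Y` a
closed subspace with `Y ∩ M = {0}` and `Y ⊆ X' := closure M`.  Then `Y` has
infinite codimension in `X'` and consequently `X' \ Y` is spaceable in `X'`:
there is a closed infinite dimensional subspace `Z ⊆ X'` with `Z ∩ Y = {0}`. -/
theorem wilansky_kalton_application
    (X : Type*) [AddCommGroup X] [Module ℂ X] [Module ℝ X] [IsScalarTower ℝ ℂ X]
    [UniformSpace X] [IsUniformAddGroup X] [ContinuousSMul ℂ X] [ContinuousSMul ℝ X]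
    [CompleteSpace X] [TopologicalSpace.MetrizableSpace X] [LocallyConvexSpace ℝ X]
    (M Y : Submodule ℂ X)
    (hM : Cardinal.aleph0 ≤ Module.rank ℂ M)
    (hYclosed : IsClosed (Y : Set X)) (hYM : Y ⊓ M = ⊥)
    (hYle : Y ≤ M.topologicalClosure) :
    Cardinal.aleph0 ≤
      Module.rank ℂ (↥M.topologicalClosure ⧸ Submodule.comap
        (M.topologicalClosure.subtype) Y) ∧
    ∃ Z : Submodule ℂ X, Z ≤ M.topologicalClosure ∧ IsClosed (Z : Set X) ∧
      Cardinal.aleph0 ≤ Module.rank ℂ Z ∧ Z ⊓ Y = ⊥ := by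
  classical
  have hMC : M ≤ M.topologicalClosure := Submodule.le_topologicalClosure M
  constructor
  · -- Part 1 : infinite codimension
    set Q := Submodule.comap (M.topologicalClosure.subtype) Y with hQ
    let L : ↥M →ₗ[ℂ] (↥M.topologicalClosure ⧸ Q) := Q.mkQ.comp (Submodule.inclusion hMC)
    have hinj : Function.Injective L := by
      rw [← LinearMap.ker_eq_bot, LinearMap.ker_eq_bot']
      intro x hx
      have h1 : (Submodule.inclusion hMC) x ∈ Q := by
        rwa [LinearMap.comp_apply, Submodule.mkQ_apply, Submodule.Quotient.mk_eq_zero] at hx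
      have h2 : (x : X) ∈ Y := h1
      have h3 : (x : X) ∈ Y ⊓ M := ⟨h2, x.2⟩
      rw [hYM, Submodule.mem_bot] at h3
      exact Subtype.ext h3
    exact le_trans hM (LinearMap.rank_le_of_injective L hinj)
  · -- Part 2 : the closed infinite dimensional subspace
    -- linearly independent sequence in M
    obtain ⟨v, hvM, hvind⟩ : ∃ v : ℕ → X, (∀ n, v n ∈ M) ∧ LinearIndependent ℂ v := by
      have hinf : Infinite (Module.Basis.ofVectorSpaceIndex ℂ ↥M) := by
        rw [Cardinal.infinite_iff, Module.Basis.mk_eq_rank'' (Module.Basis.ofVectorSpace ℂ ↥M)]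
        exact hM
      let emb := Infinite.natEmbedding (Module.Basis.ofVectorSpaceIndex ℂ ↥M)
      refine ⟨fun n => ((Module.Basis.ofVectorSpace ℂ ↥M) (emb n) : X),
        fun n => ((Module.Basis.ofVectorSpace ℂ ↥M) (emb n)).2, ?_⟩
      have h1 : LinearIndependent ℂ (fun n => (Module.Basis.ofVectorSpace ℂ ↥M) (emb n)) :=
        (Module.Basis.ofVectorSpace ℂ ↥M).linearIndependent.comp emb emb.injective
      exact h1.map' M.subtype (Submodule.ker_subtype M)
    set SpanV := Submodule.span ℂ (Set.range v) with hSpanV_def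
    have hSpanV_le_M : SpanV ≤ M :=
      Submodule.span_le.mpr (by rintro _ ⟨n, rfl⟩; exact hvM n)
    have hrankSpan : Cardinal.aleph0 ≤ Module.rank ℂ ↥SpanV := by
      have hw : LinearIndependent ℂ
          (fun n => (⟨v n, Submodule.subset_span (Set.mem_range_self n)⟩ : ↥SpanV)) := by
        apply LinearIndependent.of_comp SpanV.subtype
        exact hvind
      exact hw.aleph0_le_rank
    set E1 := SpanV.topologicalClosure with hE1_def
    have hE1C : E1 ≤ M.topologicalClosure := Submodule.topologicalClosure_mono hSpanV_le_M
    have hE1closed : IsClosed (E1 : Set X) := Submodule.isClosed_topologicalClosure _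
    -- dense sequence in Y ⊓ E1
    have hsepY1 : TopologicalSpace.IsSeparable ((Y ⊓ E1 : Submodule ℂ X) : Set X) := by
      have hcoe : (E1 : Set X) = closure ((SpanV : Submodule ℂ X) : Set X) :=
        Submodule.topologicalClosure_coe SpanV
      refine TopologicalSpace.IsSeparable.mono (wk_isSeparable_span v).closure ?_
      rw [← hcoe]
      exact SetLike.coe_subset_coe.mpr inf_le_right
    obtain ⟨c0, hc0count, hc0sub⟩ := hsepY1
    obtain ⟨d, hd⟩ := (hc0count.insert 0).exists_eq_range (Set.insert_nonempty 0 c0)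
    have hdense : ((Y ⊓ E1 : Submodule ℂ X) : Set X) ⊆ closure (Set.range d) := by
      rw [← hd]
      exact hc0sub.trans (closure_mono (Set.subset_insert 0 c0))
    -- symmetric closed convex neighborhoods
    obtain ⟨S, hScl, hSconv, hSnb, hSsym, hSsep⟩ := wk_exists_symm_basis (X := X)
    -- separating functionals
    have hBex : ∀ j n : ℕ, ∃ B : X →L[ℂ] ℂ, d j ∉ S n →
        (∀ x ∈ S n, |RCLike.re (B x)| ≤ 1) ∧ 1 < RCLike.re (B (d j)) :=
      fun j n => wk_exists_B (S n) (hScl n) (hSconv n) (hSnb n) (hSsym n) (d j)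
    choose B hBspec using hBex
    -- totality of the family B over Y ⊓ E1
    have htot : ∀ y : X, y ∈ Y → y ∈ E1 → (∀ j n, B j n y = 0) → y = 0 := by
      intro y hyY hyE1 hB0
      by_contra hy0
      obtain ⟨n, hn⟩ := hSsep y hy0
      have hV : (fun x : X => (2 : ℝ) • x) ⁻¹' (S n) ∈ 𝓝 (0 : X) := by
        refine (continuous_const_smul (2 : ℝ)).continuousAt.preimage_mem_nhds ?_
        show S n ∈ 𝓝 ((2 : ℝ) • (0 : X))
        rw [smul_zero]
        exact hSnb n
      have hWnhd : {x : X | x - y ∈ (fun x : X => (2 : ℝ) • x) ⁻¹' (S n)} ∈ 𝓝 y := by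
        have hc : ContinuousAt (fun x : X => x - y) y :=
          (continuous_id.sub continuous_const).continuousAt
        have h2 := hc.preimage_mem_nhds (by rw [sub_self]; exact hV)
        exact h2
      have hyc : y ∈ closure (Set.range d) :=
        hdense (SetLike.mem_coe.mpr (Submodule.mem_inf.mpr ⟨hyY, hyE1⟩))
      obtain ⟨x0, hx0V, hx0d⟩ := mem_closure_iff_nhds.mp hyc _ hWnhd
      obtain ⟨j, rfl⟩ := hx0d
      have hdjy : (2 : ℝ) • (d j - y) ∈ S n := hx0V
      have hdj_not : d j ∉ S n := by
        intro hmem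
        apply hn
        have hs0 : -((2 : ℝ) • (d j - y)) ∈ S n := hSsym n _ hdjy
        have hq : (2⁻¹ : ℝ) • (-((2 : ℝ) • (d j - y))) ∈ S n :=
          (hSconv n).smul_mem_of_zero_mem (mem_of_mem_nhds (hSnb n)) hs0
            ⟨by norm_num, by norm_num⟩
        have hcomb := (hSconv n) hmem hq (by norm_num : (0:ℝ) ≤ 2⁻¹)
          (by norm_num : (0:ℝ) ≤ 2⁻¹) (by norm_num)
        have heq : (2⁻¹ : ℝ) • d j + (2⁻¹ : ℝ) • ((2⁻¹ : ℝ) • (-((2 : ℝ) • (d j - y))))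
            = (2⁻¹ : ℝ) • y := by
          module
        rwa [heq] at hcomb
      obtain ⟨hbound, hgt⟩ := hBspec j n hdj_not
      have hBy : B j n y = 0 := hB0 j n
      have hsplit : d j - y + y = d j := by abel
      have hre1 : RCLike.re (B j n (d j - y)) ≤ 1 := by
        have h5 : d j - y = (2⁻¹ : ℝ) • ((2 : ℝ) • (d j - y)) := by
          rw [smul_smul]; norm_num
        rw [h5, ContinuousLinearMap.map_smul_of_tower, RCLike.smul_re]
        have h6 := (abs_le.mp (hbound _ hdjy)).2
        have h7 := mul_le_mul_of_nonneg_left h6 (by norm_num : (0:ℝ) ≤ 2⁻¹)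
        linarith
      have hgt2 : 1 < RCLike.re (B j n (d j - y)) := by
        have : B j n (d j) = B j n (d j - y) + B j n y := by rw [← map_add, hsplit]
        rw [this, hBy, add_zero] at hgt
        exact hgt
      linarith
    -- the recursive construction of the biorthogonal system
    let Good : ℕ → (ℕ → X × (X →L[ℂ] ℂ)) → X × (X →L[ℂ] ℂ) → Prop := fun m w p =>
      (∀ k, k < m → (w k).1 ∈ SpanV) →
      (p.1 ∈ SpanV ∧
       p.1 ∉ Y ⊔ Submodule.span ℂ ((fun k => (w k).1) '' Set.Iio m) ∧
       (∀ k, k < m → (w k).2 p.1 = 0) ∧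
       (∀ t, t < m → B (Nat.unpair t).1 (Nat.unpair t).2 p.1 = 0) ∧
       (∀ x ∈ Y ⊔ Submodule.span ℂ ((fun k => (w k).1) '' Set.Iio m), p.2 x = 0) ∧
       p.2 p.1 = 1)
    have hmono : ∀ m (w w' : ℕ → X × (X →L[ℂ] ℂ)), (∀ k, k < m → w k = w' k) →
        ∀ p, Good m w p → Good m w' p := by
      intro m w w' hagree p hp hprev'
      have hprev : ∀ k, k < m → (w k).1 ∈ SpanV := by
        intro k hk
        rw [hagree k hk]
        exact hprev' k hk
      obtain ⟨h1, h2, h3, h4, h5, h6⟩ := hp hprev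
      have himg : (fun k => (w' k).1) '' Set.Iio m = (fun k => (w k).1) '' Set.Iio m :=
        Set.image_congr (fun k hk => by rw [hagree k (Set.mem_Iio.mp hk)])
      refine ⟨h1, by rw [himg]; exact h2, ?_, h4, by rw [himg]; exact h5, h6⟩
      intro k hk
      rw [← hagree k hk]
      exact h3 k hk
    have hex : ∀ m (w : ℕ → X × (X →L[ℂ] ℂ)), ∃ p, Good m w p := by
      intro m w
      by_cases hprev : ∀ k, k < m → (w k).1 ∈ SpanV
      · set T := Submodule.span ℂ ((fun k => (w k).1) '' Set.Iio m) with hT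
        haveI : FiniteDimensional ℂ T :=
          FiniteDimensional.span_of_finite ℂ ((Set.finite_Iio m).image _)
        have hTM : T ≤ M := Submodule.span_le.mpr
          (by rintro _ ⟨k, hk, rfl⟩; exact hSpanV_le_M (hprev k (Set.mem_Iio.mp hk)))
        set l : List (X →ₗ[ℂ] ℂ) :=
          ((List.range m).map fun k => ((w k).2 : X →ₗ[ℂ] ℂ)) ++
          ((List.range m).map fun t =>
            ((B (Nat.unpair t).1 (Nat.unpair t).2 : X →L[ℂ] ℂ) : X →ₗ[ℂ] ℂ)) with hl
        have hrk := wk_rank_inf_kers SpanV hrankSpan l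
        have hnotle : ¬ (SpanV ⊓ l.foldr (fun f T => LinearMap.ker f ⊓ T) ⊤ ≤ Y ⊔ T) := by
          intro hle
          have hle2 : SpanV ⊓ l.foldr (fun f T => LinearMap.ker f ⊓ T) ⊤ ≤ T := by
            intro x hx
            obtain ⟨y, hy, t, ht, rfl⟩ := Submodule.mem_sup.mp (hle hx)
            have hyM : y ∈ M := by
              have hxM : y + t ∈ M := hSpanV_le_M (Submodule.mem_inf.mp hx).1
              have htM : t ∈ M := hTM ht
              simpa using M.sub_mem hxM htM
            have hy0 : y ∈ Y ⊓ M := ⟨hy, hyM⟩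
            rw [hYM, Submodule.mem_bot] at hy0
            rw [hy0, zero_add]
            exact ht
          have hlt := lt_of_le_of_lt (Submodule.rank_mono hle2) (Module.rank_lt_aleph0 ℂ ↥T)
          exact absurd hrk hlt.2
        obtain ⟨x, hxmem, hxnot⟩ := SetLike.not_le_iff_exists.mp hnotle
        have hclosedYT : IsClosed ((Y ⊔ T : Submodule ℂ X) : Set X) :=
          wk_isClosed_sup Y T hYclosed
        obtain ⟨g, hg0, hg1⟩ := wk_exists_functional (Y ⊔ T) hclosedYT hxnot
        have hker : ∀ f ∈ l, f x = 0 := wk_mem_foldr l x (Submodule.mem_inf.mp hxmem).2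
        refine ⟨(x, g), fun _ => ⟨(Submodule.mem_inf.mp hxmem).1, hxnot, ?_, ?_, hg0, hg1⟩⟩
        · intro k hk
          have hmem : ((w k).2 : X →ₗ[ℂ] ℂ) ∈ l :=
            List.mem_append_left _ (List.mem_map.mpr ⟨k, List.mem_range.mpr hk, rfl⟩)
          exact hker _ hmem
        · intro t ht
          have hmem : ((B (Nat.unpair t).1 (Nat.unpair t).2 : X →L[ℂ] ℂ) : X →ₗ[ℂ] ℂ) ∈ l :=
            List.mem_append_right _ (List.mem_map.mpr ⟨t, List.mem_range.mpr ht, rfl⟩)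
          exact hker _ hmem
      · exact ⟨(0, 0), fun h => absurd h hprev⟩
    obtain ⟨w, hwG⟩ := wk_nat_choice Good hmono hex
    have hSpanAll : ∀ k, (w k).1 ∈ SpanV := by
      intro k
      induction k using Nat.strong_induction_on with
      | _ k ih => exact ((hwG k) (fun j hj => ih j hj)).1
    have hGood := fun m => hwG m (fun k _ => hSpanAll k)
    set u : ℕ → X := fun k => (w k).1 with hu
    set f : ℕ → (X →L[ℂ] ℂ) := fun k => (w k).2 with hf
    have hu_mem : ∀ m, u m ∈ SpanV := fun m => (hGood m).1
    have hu_not : ∀ m, u m ∉ Y ⊔ Submodule.span ℂ (u '' Set.Iio m) :=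
      fun m => (hGood m).2.1
    have hf_prev : ∀ m k, k < m → f k (u m) = 0 := fun m k hk => (hGood m).2.2.1 k hk
    have hB_prev : ∀ m t, t < m → B (Nat.unpair t).1 (Nat.unpair t).2 (u m) = 0 :=
      fun m t ht => (hGood m).2.2.2.1 t ht
    have hf_vanish : ∀ m, ∀ x ∈ Y ⊔ Submodule.span ℂ (u '' Set.Iio m), f m x = 0 :=
      fun m => (hGood m).2.2.2.2.1
    have hf_one : ∀ m, f m (u m) = 1 := fun m => (hGood m).2.2.2.2.2
    have hfY : ∀ m, ∀ y ∈ Y, f m y = 0 := fun m y hy =>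
      hf_vanish m y (Submodule.mem_sup_left hy)
    have hdelta : ∀ k s, f k (u s) = if k = s then 1 else 0 := by
      intro k s
      rcases lt_trichotomy k s with h | h | h
      · rw [if_neg h.ne]
        exact hf_prev s k h
      · subst h
        rw [if_pos rfl]
        exact hf_one k
      · rw [if_neg h.ne']
        exact hf_vanish k _ (Submodule.mem_sup_right
          (Submodule.subset_span ⟨s, Set.mem_Iio.mpr h, rfl⟩))
    have hindep : LinearIndependent ℂ u := wk_biorth_indep u f hdelta
    set g : ℕ → (X →L[ℂ] ℂ) := fun t => B (Nat.unpair t).1 (Nat.unpair t).2 -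
      ∑ s ∈ Finset.range (t+1), (B (Nat.unpair t).1 (Nat.unpair t).2 (u s)) • f s with hg
    have hg_apply : ∀ t x, g t x = B (Nat.unpair t).1 (Nat.unpair t).2 x -
        ∑ s ∈ Finset.range (t+1), (B (Nat.unpair t).1 (Nat.unpair t).2 (u s)) * f s x := by
      intro t x
      simp [hg, ContinuousLinearMap.sub_apply, ContinuousLinearMap.sum_apply,
        ContinuousLinearMap.smul_apply, smul_eq_mul]
    have hgu : ∀ t m, g t (u m) = 0 := by
      intro t m
      rw [hg_apply]
      rcases le_or_gt m t with h | h
      · rw [Finset.sum_eq_single m]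
        · rw [hf_one m, mul_one, sub_self]
        · intro s _ hsm
          rw [hdelta s m, if_neg hsm, mul_zero]
        · intro hnm
          exact absurd (Finset.mem_range.mpr (Nat.lt_succ_of_le h)) hnm
      · have h1 : ∀ s ∈ Finset.range (t+1),
            B (Nat.unpair t).1 (Nat.unpair t).2 (u s) * f s (u m) = 0 := by
          intro s hs
          have hsm : s < m := lt_of_le_of_lt (Nat.lt_succ_iff.mp (Finset.mem_range.mp hs)) h
          rw [hf_prev m s hsm, mul_zero]
        rw [Finset.sum_eq_zero h1, hB_prev m t h, sub_zero]
    have hZu : ∀ m, u m ∈ E1 ⊓ ⨅ t : ℕ, LinearMap.ker (g t : X →ₗ[ℂ] ℂ) := by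
      intro m
      refine Submodule.mem_inf.mpr ⟨Submodule.le_topologicalClosure SpanV (hu_mem m), ?_⟩
      exact (Submodule.mem_iInf _).mpr fun t => LinearMap.mem_ker.mpr (hgu t m)
    refine ⟨E1 ⊓ ⨅ t : ℕ, LinearMap.ker (g t : X →ₗ[ℂ] ℂ), le_trans inf_le_left hE1C, ?_, ?_, ?_⟩
    · -- closed
      have hset : ((E1 ⊓ ⨅ t : ℕ, LinearMap.ker (g t : X →ₗ[ℂ] ℂ) : Submodule ℂ X) : Set X)
          = (E1 : Set X) ∩ ⋂ t : ℕ, (LinearMap.ker (g t : X →ₗ[ℂ] ℂ) : Set X) := by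
        rw [Submodule.coe_inf, Submodule.coe_iInf]
      rw [hset]
      exact hE1closed.inter (isClosed_iInter fun t => ContinuousLinearMap.isClosed_ker (g t))
    · -- infinite rank
      have hindepZ : LinearIndependent ℂ
          (fun m => (⟨u m, hZu m⟩ : ↥(E1 ⊓ ⨅ t : ℕ, LinearMap.ker (g t : X →ₗ[ℂ] ℂ)))) := by
        apply LinearIndependent.of_comp (E1 ⊓ ⨅ t : ℕ, LinearMap.ker (g t : X →ₗ[ℂ] ℂ)).subtype
        exact hindep
      exact hindepZ.aleph0_le_rank
    · -- trivial intersection with Y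
      rw [Submodule.eq_bot_iff]
      intro z hz
      obtain ⟨hzZ, hzY⟩ := Submodule.mem_inf.mp hz
      obtain ⟨hzE1, hzker⟩ := Submodule.mem_inf.mp hzZ
      refine htot z hzY hzE1 ?_
      intro j n
      have h := LinearMap.mem_ker.mp ((Submodule.mem_iInf _).mp hzker (Nat.pair j n))
      rw [ContinuousLinearMap.coe_coe, hg_apply] at h
      have hsum0 : ∑ s ∈ Finset.range (Nat.pair j n + 1),
          B (Nat.unpair (Nat.pair j n)).1 (Nat.unpair (Nat.pair j n)).2 (u s) * f s z = 0 :=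
        Finset.sum_eq_zero fun s _ => by rw [hfY s z hzY, mul_zero]
      rw [hsum0, sub_zero, Nat.unpair_pair] at h
      exact h
end

section
/- A separable infinite dimensional F-space (complete metrizable topological vector space) over ℂ has algebraic dimension exactly 𝔠; in particular, it is not countably generated as an algebra or as a vector space. -/
open Set Filter Topology Cardinal Submodule
open scoped Pointwise Uniformity

noncomputable section FSpaceRankAux

/-- Stage data for the Cantor-scheme construction of a continuum-sized linearly
independent family in an infinite-dimensional F-space. -/
structure FPack (X : Type*) [AddCommGroup X] [Module ℂ X] [TopologicalSpace X]
    (W : ℕ → Set X) (n : ℕ) where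
  x : (Fin n → Bool) → X
  S : Set X
  mem : S ∈ 𝓝 (0 : X)
  sub : S ⊆ W n
  rob : ∀ y : (Fin n → Bool) → X,
    (∀ t, y t - x t ∈ closure (S + S)) → LinearIndependent ℂ y

section Lemmas
variable {X : Type*} [AddCommGroup X] [Module ℂ X] [TopologicalSpace X]
  [IsTopologicalAddGroup X] [ContinuousSMul ℂ X] [T2Space X]




variable {X : Type*} [AddCommGroup X] [Module ℂ X] [TopologicalSpace X]
  [IsTopologicalAddGroup X] [ContinuousSMul ℂ X] [T2Space X]

/-- Linear independence of a finite tuple is a "robust" (open) condition. -/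
lemma exists_nhds_robust {ι : Type*} [Fintype ι] {y : ι → X}
    (hy : LinearIndependent ℂ y) :
    ∃ V ∈ 𝓝 (0 : X), ∀ z : ι → X, (∀ i, z i - y i ∈ V) → LinearIndependent ℂ z := by
  classical
  set K : Set (ι → ℂ) := Metric.sphere 0 1 with hK
  have hKc : IsCompact K := isCompact_sphere 0 1
  have hg : Continuous fun p : (ι → ℂ) × (ι → X) => ∑ i, p.1 i • p.2 i := by
    refine continuous_finset_sum _ fun i _ => Continuous.smul ?_ ?_
    · exact (continuous_apply i).comp continuous_fst
    · exact (continuous_apply i).comp continuous_snd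
  set A : Set ((ι → ℂ) × (ι → X)) :=
    (fun p : (ι → ℂ) × (ι → X) => ∑ i, p.1 i • p.2 i) ⁻¹' {0} with hA
  have hAc : IsClosed A := isClosed_singleton.preimage hg
  have hsub : K ×ˢ ({y} : Set (ι → X)) ⊆ Aᶜ := by
    rintro ⟨c, z⟩ ⟨hc, hz⟩
    rcases hz with rfl
    intro hmem
    have hc0 : c ≠ 0 := by
      intro h
      rw [h] at hc
      simp [hK] at hc
    have := Fintype.linearIndependent_iff.1 hy c hmem
    exact hc0 (funext fun i => this i)
  obtain ⟨u, v, -, hvo, hKu, hyv, huv⟩ :=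
    generalized_tube_lemma hKc isCompact_singleton hAc.isOpen_compl hsub
  -- `v` is an open neighborhood of `y` in the product; extract a uniform `V`
  have hvy : v ∈ 𝓝 y := hvo.mem_nhds (hyv rfl)
  rw [nhds_pi, Filter.mem_pi] at hvy
  obtain ⟨I, hIfin, t, ht, htv⟩ := hvy
  have htV : ∀ i, {w : X | y i + w ∈ t i} ∈ 𝓝 (0 : X) := by
    intro i
    have : Continuous fun w : X => y i + w := continuous_const.add continuous_id
    have := this.continuousAt (x := (0 : X))
    apply this
    simpa using ht i
  refine ⟨⋂ i, {w : X | y i + w ∈ t i}, ?_, ?_⟩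
  · exact Filter.iInter_mem.2 htV
  · intro z hz
    have hzv : z ∈ v := by
      apply htv
      intro i _
      have := hz i
      rw [Set.mem_iInter] at this
      have h2 := this i
      simpa using h2
    -- now any nonzero coefficient relation is impossible
    rw [Fintype.linearIndependent_iff]
    intro g hgsum
    by_contra hgne
    push_neg at hgne
    obtain ⟨j, hj⟩ := hgne
    have hgn0 : g ≠ 0 := fun h => hj (by simp [h])
    have hnorm : ‖g‖ ≠ 0 := norm_ne_zero_iff.2 hgn0
    set c : ι → ℂ := ((‖g‖ : ℂ))⁻¹ • g with hc
    have hcK : c ∈ K := by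
      simp only [hK, Metric.mem_sphere, dist_zero_right, hc, norm_smul]
      rw [norm_inv]
      simp [Complex.norm_real, abs_of_nonneg (norm_nonneg g), inv_mul_cancel₀ hnorm]
    have hczero : ∑ i, c i • z i = 0 := by
      have : ∑ i, c i • z i = ((‖g‖ : ℂ))⁻¹ • ∑ i, g i • z i := by
        rw [Finset.smul_sum]
        refine Finset.sum_congr rfl fun i _ => ?_
        simp [hc, smul_smul]
      rw [this, hgsum, smul_zero]
    have : (c, z) ∈ A := by simpa [hA] using hczero
    exact huv (Set.mk_mem_prod (hKu hcK) hzv) this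





lemma exists_perturb (hrank : ℵ₀ ≤ Module.rank ℂ X) :
    ∀ (m : ℕ) (p : Fin m → X) (U : Set X), U ∈ 𝓝 (0 : X) →
      ∃ q : Fin m → X, (∀ i, q i - p i ∈ U) ∧ LinearIndependent ℂ q := by
  intro m
  induction m with
  | zero =>
    intro p U hU
    exact ⟨p, fun i => i.elim0, linearIndependent_empty_type⟩
  | succ m ih =>
    intro p U hU
    obtain ⟨q', hq'mem, hq'⟩ := ih (p ∘ Fin.castSucc) U hU
    set F := Submodule.span ℂ (Set.range q') with hF
    haveI : FiniteDimensional ℂ F := FiniteDimensional.span_of_finite ℂ (Set.finite_range q')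
    have hFc : IsClosed (F : Set X) := F.closed_of_finiteDimensional
    have hFne : F ≠ ⊤ := by
      intro h
      have h1 : Module.rank ℂ F ≤ #(Set.range q') := rank_span_le _
      have h2 : #(Set.range q') < ℵ₀ := (Set.finite_range q').lt_aleph0
      rw [h, rank_top] at h1
      exact absurd hrank (not_le.mpr (h1.trans_lt h2))
    haveI : NeBot (𝓝[{ x : ℂ | IsUnit x }] (0 : ℂ)) := NormedField.nhdsWithin_isUnit_neBot
    have hint : interior (F : Set X) = ∅ := by
      by_contra h
      exact hFne (F.eq_top_of_nonempty_interior'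
        (Set.nonempty_iff_ne_empty.mpr h))
    have hdense : Dense ((F : Set X)ᶜ) := interior_eq_empty_iff_dense_compl.1 hint
    set O : Set X := {z : X | z - p (Fin.last m) ∈ interior U} with hO
    have hOopen : IsOpen O := isOpen_interior.preimage (continuous_id.sub continuous_const)
    have hOne : O.Nonempty := ⟨p (Fin.last m), by
      simp only [hO, Set.mem_setOf_eq, sub_self]
      exact mem_interior_iff_mem_nhds.mpr hU⟩
    obtain ⟨z, hzF, hzO⟩ := hdense.exists_mem_open hOopen hOne
    refine ⟨Fin.snoc q' z, ?_, ?_⟩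
    · intro i
      refine Fin.lastCases ?_ ?_ i
      · rw [Fin.snoc_last]
        exact interior_subset hzO
      · intro j
        rw [Fin.snoc_castSucc]
        exact hq'mem j
    · exact linearIndependent_fin_snoc.mpr ⟨hq', fun h => hzF h⟩

lemma exists_perturb' (hrank : ℵ₀ ≤ Module.rank ℂ X) (ι : Type*) [Fintype ι]
    (p : ι → X) {U : Set X} (hU : U ∈ 𝓝 (0 : X)) :
    ∃ q : ι → X, (∀ i, q i - p i ∈ U) ∧ LinearIndependent ℂ q := by
  classical
  let e := Fintype.equivFin ι
  obtain ⟨q', h1, h2⟩ := exists_perturb hrank _ (p ∘ e.symm) U hU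
  refine ⟨q' ∘ e, fun i => ?_, h2.comp e e.injective⟩
  simpa using h1 (e i)


variable [RegularSpace X]


/-- common final part: given independent `q` and a target neighborhood `G`, build the pack -/
lemma build_pack (hrank : ℵ₀ ≤ Module.rank ℂ X) {W : ℕ → Set X} {n : ℕ}
    {q : (Fin n → Bool) → X} (hq : LinearIndependent ℂ q)
    {G : Set X} (hG : G ∈ 𝓝 (0 : X)) (hGW : G ⊆ W n) :
    ∃ st : FPack X W n, st.x = q ∧ st.S + st.S ⊆ G := by
  obtain ⟨V, hV, hVrob⟩ := exists_nhds_robust hq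
  obtain ⟨T, hT, hTc, hTV⟩ := exists_mem_nhds_isClosed_subset hV
  obtain ⟨S, hS, hShalf⟩ := exists_nhds_zero_half (Filter.inter_mem hT hG)
  have h0S : (0 : X) ∈ S := mem_of_mem_nhds hS
  have hSsub : S ⊆ T ∩ G := fun s hs => by
    simpa using hShalf s hs 0 h0S
  have hSS : S + S ⊆ T ∩ G := by
    rw [Set.add_subset_iff]
    exact hShalf
  refine ⟨⟨q, S, hS, fun s hs => hGW (hSsub hs).2, ?_⟩, rfl, fun s hs => (hSS hs).2⟩
  intro y hy
  refine hVrob y fun t => ?_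
  have : closure (S + S) ⊆ T := by
    calc closure (S + S) ⊆ closure (T ∩ G) := closure_mono hSS
    _ ⊆ closure T := closure_mono Set.inter_subset_left
    _ = T := hTc.closure_eq
  exact hTV (this (hy t))

lemma fpack_base (hrank : ℵ₀ ≤ Module.rank ℂ X) (W : ℕ → Set X) (hW0 : W 0 ∈ 𝓝 (0 : X)) :
    Nonempty (FPack X W 0) := by
  obtain ⟨q, -, hq⟩ := exists_perturb' hrank (Fin 0 → Bool) 0 Filter.univ_mem
  obtain ⟨st, -, -⟩ := build_pack hrank hq hW0 (le_refl _)
  exact ⟨st⟩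

lemma fpack_step (hrank : ℵ₀ ≤ Module.rank ℂ X) (W : ℕ → Set X) (n : ℕ)
    (st : FPack X W n) (hWn : W (n + 1) ∈ 𝓝 (0 : X)) :
    ∃ st' : FPack X W (n + 1),
      (∀ t, st'.x t - st.x (Fin.init t) ∈ st.S) ∧ st'.S + st'.S ⊆ st.S := by
  have hint : interior st.S ∈ 𝓝 (0 : X) := interior_mem_nhds.mpr st.mem
  obtain ⟨q, hqmem, hq⟩ :=
    exists_perturb' hrank (Fin (n + 1) → Bool) (fun t => st.x (Fin.init t)) hint
  obtain ⟨st', hx, hsub⟩ :=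
    build_pack hrank hq (Filter.inter_mem hWn st.mem) Set.inter_subset_left
  refine ⟨st', fun t => ?_, fun s hs => (hsub hs).2⟩
  rw [hx]
  exact interior_subset (hqmem t)





theorem exists_linearIndependent_cantor
    (X : Type*) [AddCommGroup X] [Module ℂ X] [UniformSpace X]
    [IsUniformAddGroup X] [ContinuousSMul ℂ X] [CompleteSpace X]
    [TopologicalSpace.MetrizableSpace X]
    (hrank : ℵ₀ ≤ Module.rank ℂ X) :
    ∃ Φ : (ℕ → Bool) → X, LinearIndependent ℂ Φ := by
  classical
  haveI : RegularSpace X := by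
    letI : MetricSpace X := TopologicalSpace.metrizableSpaceMetric X
    infer_instance
  obtain ⟨W0, hW0⟩ := (𝓝 (0 : X)).exists_antitone_basis
  have hW0mem : ∀ n, W0 n ∈ 𝓝 (0 : X) := fun n => hW0.1.mem_of_mem trivial
  set W : ℕ → Set X := fun n => W0 n ∩ -(W0 n) with hWdef
  have hWmem : ∀ n, W n ∈ 𝓝 (0 : X) := by
    intro n
    refine Filter.inter_mem (hW0mem n) ?_
    have : ((-1 : ℂ) • ·) ⁻¹' (W0 n) ∈ 𝓝 (0 : X) := by
      apply (continuous_const_smul (-1 : ℂ)).continuousAt.preimage_mem_nhds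
      simpa using hW0mem n
    have hEq : ((-1 : ℂ) • ·) ⁻¹' (W0 n) = -(W0 n) := by
      ext a; simp [Set.mem_neg]
    rwa [hEq] at this
  -- the recursive chain of stages
  obtain ⟨st0⟩ := fpack_base hrank W (hWmem 0)
  choose step hstep1 hstep2 using fun n (st : FPack X W n) =>
    fpack_step hrank W n st (hWmem (n + 1))
  set chain : ∀ n, FPack X W n := fun n => Nat.rec st0 step n with hchain
  set x : ∀ n, (Fin n → Bool) → X := fun n => (chain n).x with hx
  set S : ℕ → Set X := fun n => (chain n).S with hS
  have hcomp : ∀ n t, x (n + 1) t - x n (Fin.init t) ∈ S n := fun n => hstep1 n (chain n)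
  have hSS : ∀ n, S (n + 1) + S (n + 1) ⊆ S n := fun n => hstep2 n (chain n)
  have h0S : ∀ n, (0 : X) ∈ S n := fun n => mem_of_mem_nhds (chain n).mem
  have h0SS : ∀ n, (0 : X) ∈ S n + S n := fun n => by
    simpa using Set.add_mem_add (h0S n) (h0S n)
  have hSsub : ∀ n, S (n + 1) ⊆ S n := fun n s hs => by
    simpa using hSS n (Set.add_mem_add hs (h0S (n + 1)))
  have hSmono : ∀ a b, a ≤ b → S b ⊆ S a := by
    intro a b h
    induction h with
    | refl => exact subset_rfl
    | step _ ih => exact (hSsub _).trans ih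
  -- restrictions and branch sequences
  set r : ∀ n, (ℕ → Bool) → (Fin n → Bool) := fun n σ i => σ i with hr
  have hinit : ∀ n σ, Fin.init (r (n + 1) σ) = r n σ := by
    intro n σ; funext i
    simp [hr, Fin.init]
  set u : (ℕ → Bool) → ℕ → X := fun σ n => x n (r n σ) with hu
  have drift0 : ∀ k n σ, u σ (n + 1 + k) - u σ (n + 1) ∈ S n := by
    intro k
    induction k with
    | zero => intro n σ; simpa using h0S n
    | succ k ih =>
      intro n σ
      have e1 : n + 1 + (k + 1) = (n + 1) + 1 + k := by omega
      have h1 : u σ ((n + 1) + 1 + k) - u σ (n + 2) ∈ S (n + 1) := ih (n + 1) σ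
      have h2 : u σ (n + 2) - u σ (n + 1) ∈ S (n + 1) := by
        have := hcomp (n + 1) (r (n + 2) σ)
        rwa [hinit (n + 1) σ] at this
      have : u σ (n + 1 + (k + 1)) - u σ (n + 1)
          = (u σ ((n + 1) + 1 + k) - u σ (n + 2)) + (u σ (n + 2) - u σ (n + 1)) := by
        rw [e1]; abel
      rw [this]
      exact hSS n (Set.add_mem_add h1 h2)
  have hdrift : ∀ σ n m, n ≤ m → u σ m - u σ n ∈ S n + S n := by
    intro σ n m hnm
    rcases Nat.eq_or_lt_of_le hnm with rfl | hlt
    · simpa using h0SS n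
    · obtain ⟨k, rfl⟩ : ∃ k, m = n + 1 + k := ⟨m - n - 1, by omega⟩
      have h1 : u σ (n + 1 + k) - u σ (n + 1) ∈ S n := drift0 k n σ
      have h2 : u σ (n + 1) - u σ n ∈ S n := by
        have := hcomp n (r (n + 1) σ)
        rwa [hinit n σ] at this
      have : u σ (n + 1 + k) - u σ n
          = (u σ (n + 1 + k) - u σ (n + 1)) + (u σ (n + 1) - u σ n) := by abel
      rw [this]
      exact Set.add_mem_add h1 h2
  -- Cauchy and limits
  have hbasis : (𝓤 X).HasBasis (fun _ : ℕ => True)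
      (fun i => {p : X × X | p.2 - p.1 ∈ W0 i}) :=
    hW0.1.uniformity_of_nhds_zero
  have hcauchy : ∀ σ, CauchySeq (u σ) := by
    intro σ
    rw [hbasis.cauchySeq_iff]
    intro i _
    refine ⟨i + 1, fun m hm n hn => ?_⟩
    have key : ∀ a b, i + 1 ≤ a → a ≤ b → u σ b - u σ a ∈ W i := by
      intro a b ha hab
      have : u σ b - u σ a ∈ S a + S a := hdrift σ a b hab
      have h2 : S a + S a ⊆ S i :=
        (Set.add_subset_add (hSmono (i+1) a ha) (hSmono (i+1) a ha)).trans (hSS i)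
      exact (chain i).sub (h2 this)
    rcases le_total m n with h | h
    · exact ((key m n hm h).1 : u σ n - u σ m ∈ W0 i)
    · have := (key n m hn h).2
      rw [Set.mem_neg] at this
      simpa using this
  have hlimit : ∀ σ, ∃ y, Tendsto (u σ) atTop (𝓝 y) :=
    fun σ => cauchySeq_tendsto_of_complete (hcauchy σ)
  choose Φ hΦt using hlimit
  have hmem : ∀ σ n, Φ σ - u σ n ∈ closure (S n + S n) := by
    intro σ n
    have h1 : Tendsto (fun m => u σ m - u σ n) atTop (𝓝 (Φ σ - u σ n)) :=
      (hΦt σ).sub_const _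
    refine mem_closure_of_tendsto h1 ?_
    filter_upwards [eventually_ge_atTop n] with m hm
    exact hdrift σ n m hm
  -- linear independence
  refine ⟨Φ, ?_⟩
  rw [linearIndependent_iff_finset_linearIndependent]
  intro F
  have hsep : ∀ σ τ : ℕ → Bool, σ ≠ τ → ∃ i, σ i ≠ τ i :=
    fun σ τ h => Function.ne_iff.mp h
  set N := F.sup (fun σ => F.sup fun τ =>
    if h : σ = τ then 0 else (hsep σ τ h).choose + 1) with hN
  have hNinj : ∀ σ ∈ F, ∀ τ ∈ F, r N σ = r N τ → σ = τ := by
    intro σ hσ τ hτ hrr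
    by_contra hne
    have hspec := (hsep σ τ hne).choose_spec
    have hlt : (hsep σ τ hne).choose < N := by
      have h1 : (F.sup fun τ' => if h : σ = τ' then 0 else (hsep σ τ' h).choose + 1) ≤ N := by
        rw [hN]
        exact Finset.le_sup (f := fun σ' => F.sup fun τ' =>
          if h : σ' = τ' then 0 else (hsep σ' τ' h).choose + 1) hσ
      have h2 : (if h : σ = τ then 0 else (hsep σ τ h).choose + 1) ≤
          (F.sup fun τ' => if h : σ = τ' then 0 else (hsep σ τ' h).choose + 1) :=
        Finset.le_sup (f := fun τ' => if h : σ = τ' then 0 else (hsep σ τ' h).choose + 1) hτ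
      rw [dif_neg hne] at h2
      omega
    exact hspec (congrFun hrr ⟨_, hlt⟩)
  set y : (Fin N → Bool) → X := fun t =>
    if h : ∃ σ, σ ∈ F ∧ r N σ = t then Φ h.choose else x N t with hy
  have hyrob : ∀ t, y t - x N t ∈ closure (S N + S N) := by
    intro t
    by_cases h : ∃ σ, σ ∈ F ∧ r N σ = t
    · rw [hy]; simp only [dif_pos h]
      have hm := hmem h.choose N
      have e : u h.choose N = x N t := congrArg (x N) h.choose_spec.2
      rwa [e] at hm
    · rw [hy]; simp only [dif_neg h, sub_self]
      exact subset_closure (h0SS N)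
  have hyind : LinearIndependent ℂ y := (chain N).rob y hyrob
  have hinj : Function.Injective (fun σ : {a // a ∈ F} => r N σ.val) := by
    intro a b hab
    exact Subtype.ext (hNinj a.val a.2 b.val b.2 hab)
  have hcomp2 := hyind.comp _ hinj
  have hEqF : (Φ ∘ (Subtype.val : {a // a ∈ F} → (ℕ → Bool)))
      = y ∘ fun σ : {a // a ∈ F} => r N σ.val := by
    funext σ
    have hex : ∃ τ, τ ∈ F ∧ r N τ = r N σ.val := ⟨σ.val, σ.2, rfl⟩
    have : y (r N σ.val) = Φ hex.choose := by rw [hy]; simp only [dif_pos hex]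
    rw [Function.comp_apply, Function.comp_apply, this]
    exact congrArg Φ (hNinj σ.val σ.2 hex.choose hex.choose_spec.1
      hex.choose_spec.2.symm).symm |>.symm
  rw [hEqF]
  exact hcomp2


lemma card_le_continuum_of_separable (X : Type*) [TopologicalSpace X]
    [TopologicalSpace.MetrizableSpace X] [TopologicalSpace.SeparableSpace X] :
    Cardinal.mk X ≤ Cardinal.continuum := by
  classical
  letI : MetricSpace X := TopologicalSpace.metrizableSpaceMetric X
  by_cases hne : Nonempty X
  · obtain ⟨D, hDc, hDd⟩ := TopologicalSpace.exists_countable_dense X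
    have hDne : D.Nonempty := hDd.nonempty
    obtain ⟨g, hg⟩ := hDc.exists_eq_range hDne
    set f : X → (ℕ → ℝ) := fun x n => dist x (g n) with hf
    have hinj : Function.Injective f := by
      intro a b hab
      have hmem : a ∈ closure D := hDd a
      rw [mem_closure_iff_seq_limit] at hmem
      obtain ⟨v, hvD, hva⟩ := hmem
      have hk : ∀ n, ∃ k, v n = g k := by
        intro n
        have := hvD n
        rw [hg] at this
        obtain ⟨k, hk⟩ := this
        exact ⟨k, hk.symm⟩
      choose k hkk using hk
      have hda : Tendsto (fun n => dist a (v n)) atTop (𝓝 0) := by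
        have := (tendsto_const_nhds (x := a) (f := atTop)).dist hva
        simpa using this
      have hdb : (fun n => dist b (v n)) = fun n => dist a (v n) := by
        funext n
        rw [hkk n]
        exact (congrFun hab (k n)).symm
      have hvb : Tendsto v atTop (𝓝 b) := by
        rw [tendsto_iff_dist_tendsto_zero]
        have : (fun n => dist (v n) b) = fun n => dist b (v n) := by
          funext n; exact dist_comm _ _
        rw [this, hdb]
        exact hda
      exact tendsto_nhds_unique hva hvb
    have h1 := Cardinal.lift_mk_le_lift_mk_of_injective hinj
    have h2 : #(ℕ → ℝ) = Cardinal.continuum := by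
      rw [Cardinal.mk_arrow]
      simp [Cardinal.mk_real, Cardinal.continuum_power_aleph0]
    rw [h2, Cardinal.lift_continuum] at h1
    rwa [← Cardinal.lift_le_continuum]
  · rw [not_nonempty_iff] at hne
    simp [Cardinal.mk_eq_zero]
end Lemmas

end FSpaceRankAux

/-- A separable infinite dimensional F-space (complete metrizable
topological vector space) over `ℂ` has algebraic dimension exactly `𝔠`; in
particular it is not countably generated as a vector space. -/
theorem separable_infinite_dim_F_space_rank_continuum
    (X : Type*) [AddCommGroup X] [Module ℂ X]
    [UniformSpace X] [IsUniformAddGroup X] [ContinuousSMul ℂ X]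
    [CompleteSpace X] [TopologicalSpace.MetrizableSpace X]
    [TopologicalSpace.SeparableSpace X]
    (hinf : Cardinal.aleph0 ≤ Module.rank ℂ X) :
    Module.rank ℂ X = Cardinal.continuum ∧
    ¬ ∃ s : Set X, s.Countable ∧ Submodule.span ℂ s = ⊤ := by
  have hlower : Cardinal.continuum ≤ Module.rank ℂ X := by
    obtain ⟨Φ, hΦ⟩ := exists_linearIndependent_cantor X hinf
    have h1 := hΦ.cardinal_lift_le_rank
    have h2 : #(ℕ → Bool) = Cardinal.continuum := by
      rw [Cardinal.mk_arrow]
      simp [Cardinal.mk_bool, Cardinal.two_power_aleph0]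
    rw [h2, Cardinal.lift_continuum] at h1
    exact Cardinal.continuum_le_lift.mp h1
  have hupper : Module.rank ℂ X ≤ Cardinal.continuum := by
    have hb := Module.Basis.ofVectorSpace ℂ X
    calc Module.rank ℂ X = #(Module.Basis.ofVectorSpaceIndex ℂ X) := hb.mk_eq_rank''.symm
      _ ≤ #X := Cardinal.mk_set_le _
      _ ≤ Cardinal.continuum := card_le_continuum_of_separable X
  have heq : Module.rank ℂ X = Cardinal.continuum := le_antisymm hupper hlower
  refine ⟨heq, ?_⟩
  rintro ⟨s, hsc, hsp⟩
  have h1 : Module.rank ℂ X ≤ #s := by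
    calc Module.rank ℂ X = Module.rank ℂ (⊤ : Submodule ℂ X) := (rank_top ℂ X).symm
      _ = Module.rank ℂ (Submodule.span ℂ s) := by rw [hsp]
      _ ≤ #s := rank_span_le s
  have h2 : #s ≤ Cardinal.aleph0 := hsc.le_aleph0
  rw [heq] at h1
  exact absurd (h1.trans h2) (not_le.mpr Cardinal.aleph0_lt_continuum)
end
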